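/- arXiv:1209.5027 — 8 statements merged into one kernel-verified Lean document; each statement's English description precedes it below -/
import Mathlib

section
/- Let u : ℝ → ℝ be continuous on [0, x₀], twice continuously differentiable on (0, x₀), satisfy u(0) = 0 and the ODE x²u''(x) = a·x·u'(x) + b·u(x) − c·(u'(x) − 1)² for all x ∈ (0, x₀), where c > 0. If additionally u'(x) → 1 as x → 0⁺ and a + b < 0, then a contradiction follows; i.e., no such solution exists. -/
open Set Filter Topology

/-- Nonexistence for a + b < 0 (Proposition 2.2): a continuous solution of the
singular ODE with `u(0) = 0` and `u'(x) → 1` as `x → 0⁺` cannot exist. -/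
theorem stmt_0 (a b c x₀ : ℝ) (hc : 0 < c) (hx₀ : 0 < x₀) (u : ℝ → ℝ)
    (hcont : ContinuousOn u (Set.Icc 0 x₀))
    (hC2 : ContDiffOn ℝ 2 u (Set.Ioo 0 x₀))
    (hu0 : u 0 = 0)
    (hode : ∀ x ∈ Set.Ioo 0 x₀,
      x ^ 2 * deriv (deriv u) x
        = a * x * deriv u x + b * u x - c * (deriv u x - 1) ^ 2)
    (hlim : Filter.Tendsto (deriv u) (nhdsWithin 0 (Set.Ioi 0)) (nhds 1))
    (hab : a + b < 0) : False := by
  have hS : (0:ℝ) < -(a+b) := by linarith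
  set S : ℝ := -(a+b) with hSdef
  set K : ℝ := S / 2 with hKdef
  have hK : 0 < K := by positivity
  set ε : ℝ := S / (2*(|a|+|b|)+2) with hεdef
  have hε : 0 < ε := by
    apply div_pos hS
    positivity
  -- eventual bound on deriv u near 0
  have hev : ∀ᶠ x in nhdsWithin 0 (Ioi 0), |deriv u x - 1| < ε := by
    have := Metric.tendsto_nhds.mp hlim ε hε
    simpa [Real.dist_eq] using this
  obtain ⟨δ₁, hδ₁, hsub⟩ := mem_nhdsGT_iff_exists_Ioo_subset.mp hev
  set δ : ℝ := min δ₁ x₀ with hδdef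
  have hδpos : 0 < δ := lt_min hδ₁ hx₀
  have hδsub : Ioo 0 δ ⊆ Ioo 0 x₀ := Ioo_subset_Ioo le_rfl (min_le_right _ _)
  have hD : ∀ x ∈ Ioo 0 δ, |deriv u x - 1| < ε := fun x hx =>
    hsub ⟨hx.1, lt_of_lt_of_le hx.2 (min_le_left _ _)⟩
  -- differentiability facts
  have hu_diff : ∀ z ∈ Ioo 0 x₀, HasDerivAt u (deriv u z) z := fun z hz =>
    ((hC2.differentiableOn (by norm_num)).differentiableAt
      (isOpen_Ioo.mem_nhds hz)).hasDerivAt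
  have hC1 : ContDiffOn ℝ 1 (deriv u) (Ioo 0 x₀) :=
    hC2.deriv_of_isOpen isOpen_Ioo (by norm_num)
  have hderiv2 : ∀ z ∈ Ioo 0 x₀, HasDerivAt (deriv u) (deriv (deriv u) z) z := fun z hz =>
    ((hC1.differentiableOn one_ne_zero).differentiableAt (isOpen_Ioo.mem_nhds hz)).hasDerivAt
  -- Claim A: |u x - x| ≤ ε x on (0, δ)
  have hA : ∀ x ∈ Ioo 0 δ, |u x - x| ≤ ε * x := by
    intro x hx
    have hx0 : 0 < x := hx.1
    have hbound : ∀ t ∈ Ioo 0 x, |u x - x| ≤ |u t - t| + ε * x := by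
      intro t ht
      have hss : Icc t x ⊆ Ioo 0 δ := fun z hz =>
        ⟨lt_of_lt_of_le ht.1 hz.1, lt_of_le_of_lt hz.2 hx.2⟩
      have hmv := Convex.norm_image_sub_le_of_norm_hasDerivWithin_le
        (f := fun z => u z - z) (f' := fun z => deriv u z - 1) (s := Icc t x) (C := ε)
        (fun z hz => ((hu_diff z (hδsub (hss hz))).sub (hasDerivAt_id z)).hasDerivWithinAt)
        (fun z hz => le_of_lt (by simpa using hD z (hss hz)))
        (convex_Icc t x)
        (left_mem_Icc.mpr (le_of_lt ht.2)) (right_mem_Icc.mpr (le_of_lt ht.2))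
      have h1 : |u x - x - (u t - t)| ≤ ε * (x - t) := by
        have : ‖(u x - x) - (u t - t)‖ ≤ ε * ‖x - t‖ := hmv
        rwa [Real.norm_eq_abs, Real.norm_eq_abs, abs_of_pos (by linarith [ht.2] : (0:ℝ) < x - t)] at this
      have h2 : |u x - x| ≤ |u t - t| + |u x - x - (u t - t)| := by
        have := abs_add_le (u t - t) (u x - x - (u t - t))
        simpa using this
      have h3 : ε * (x - t) ≤ ε * x := by nlinarith [ht.1, hε]
      linarith
    -- take t → 0⁺
    have h1 : Tendsto u (nhdsWithin 0 (Ioi 0)) (nhds 0) := by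
      have h := hcont 0 ⟨le_rfl, hx₀.le⟩
      rw [ContinuousWithinAt, hu0] at h
      have heq : 𝓝[Ioo (0:ℝ) x₀] 0 = 𝓝[>] (0:ℝ) := nhdsWithin_Ioo_eq_nhdsGT hx₀
      exact heq ▸ (h.mono_left (nhdsWithin_mono _ Ioo_subset_Icc_self))
    have hid : Tendsto (fun t : ℝ => t) (nhdsWithin 0 (Ioi 0)) (nhds 0) :=
      tendsto_id.mono_left nhdsWithin_le_nhds
    have hlim0 : Tendsto (fun t => |u t - t| + ε * x) (nhdsWithin 0 (Ioi 0))
        (nhds (ε * x)) := by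
      have := ((h1.sub hid).abs).add (tendsto_const_nhds (x := ε * x))
      simpa using this
    have hev2 : ∀ᶠ t in nhdsWithin 0 (Ioi 0), |u x - x| ≤ |u t - t| + ε * x := by
      filter_upwards [Ioo_mem_nhdsGT_of_mem (Set.mem_Ico.mpr ⟨le_rfl, hx0⟩)] with t ht
      exact hbound t ht
    exact ge_of_tendsto hlim0 hev2
  -- Claim B: deriv (deriv u) x ≤ -K / x on (0, δ)
  have hB : ∀ x ∈ Ioo 0 δ, deriv (deriv u) x ≤ -K / x := by
    intro x hx
    have hx0 : 0 < x := hx.1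
    have hode' := hode x (hδsub hx)
    have h1 : |deriv u x - 1| ≤ ε := (hD x hx).le
    have h2 := hA x hx
    have hεb : (|a|+|b|) * ε ≤ K := by
      rw [hεdef, hKdef, mul_comm, div_mul_eq_mul_div, div_le_div_iff₀ (by positivity) two_pos]
      nlinarith [abs_nonneg a, abs_nonneg b, hS]
    have ha1 : a * x * (deriv u x - 1) ≤ |a| * ε * x := by
      calc a * x * (deriv u x - 1) ≤ |a * x * (deriv u x - 1)| := le_abs_self _
        _ = |a| * x * |deriv u x - 1| := by
            rw [abs_mul, abs_mul, abs_of_pos hx0]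
        _ ≤ |a| * x * ε := by
            apply mul_le_mul_of_nonneg_left h1
            positivity
        _ = |a| * ε * x := by ring
    have hb1 : b * (u x - x) ≤ |b| * ε * x := by
      calc b * (u x - x) ≤ |b * (u x - x)| := le_abs_self _
        _ = |b| * |u x - x| := abs_mul _ _
        _ ≤ |b| * (ε * x) := mul_le_mul_of_nonneg_left h2 (abs_nonneg b)
        _ = |b| * ε * x := by ring
    have hεbx : (|a|+|b|) * ε * x ≤ K * x := mul_le_mul_of_nonneg_right hεb hx0.le
    have key : x ^ 2 * deriv (deriv u) x ≤ -(K * x) := by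
      nlinarith [mul_nonneg hc.le (sq_nonneg (deriv u x - 1)), ha1, hb1, hεbx]
    rw [le_div_iff₀ hx0]
    nlinarith [key, hx0]
  -- the auxiliary function φ and its monotonicity
  set φ : ℝ → ℝ := fun x => deriv u x + K * Real.log x with hφdef
  have hφ' : ∀ x ∈ Ioo 0 δ, HasDerivAt φ (deriv (deriv u) x + K * x⁻¹) x := by
    intro x hx
    exact (hderiv2 x (hδsub hx)).add ((Real.hasDerivAt_log hx.1.ne').const_mul K)
  have hanti : AntitoneOn φ (Ioo 0 δ) := by
    apply antitoneOn_of_deriv_nonpos (convex_Ioo 0 δ)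
    · exact fun x hx => ((hφ' x hx).continuousAt).continuousWithinAt
    · rw [interior_Ioo]
      exact fun x hx => (hφ' x hx).differentiableAt.differentiableWithinAt
    · rw [interior_Ioo]
      intro x hx
      rw [(hφ' x hx).deriv]
      have h := hB x hx
      have heq : -K / x = -(K * x⁻¹) := by ring
      linarith [heq ▸ h]
  -- derive the contradiction
  set y : ℝ := δ / 2 with hy
  have hy_mem : y ∈ Ioo 0 δ := ⟨by positivity, by simp [hy]; linarith⟩
  set M : ℝ := φ y with hM
  set z : ℝ := min (Real.exp ((M - 1 - ε)/K - 1)) y with hz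
  have hz0 : 0 < z := lt_min (Real.exp_pos _) hy_mem.1
  have hzy : z ≤ y := min_le_right _ _
  have hz_mem : z ∈ Ioo 0 δ := ⟨hz0, lt_of_le_of_lt hzy hy_mem.2⟩
  have hmono : M ≤ φ z := hanti hz_mem hy_mem hzy
  have hlog : Real.log z ≤ (M - 1 - ε)/K - 1 := by
    rw [Real.log_le_iff_le_exp hz0]
    exact min_le_left _ _
  have hub : deriv u z - 1 < ε := (abs_lt.mp (hD z hz_mem)).2
  have hKlog : K * Real.log z ≤ K * ((M - 1 - ε)/K - 1) :=
    mul_le_mul_of_nonneg_left hlog hK.le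
  have hfield : K * ((M - 1 - ε)/K - 1) = M - 1 - ε - K := by
    field_simp
  have hφz : φ z = deriv u z + K * Real.log z := rfl
  rw [hφz] at hmono
  clear_value K M z
  linarith [hmono, hKlog, hfield, hub, hK]
end

section
/- Suppose y ∈ C⁰([0,∞)) ∩ C²((0,∞)) is nonconstant and satisfies x²y''(x) = f(x)y'(x) + g(x, y(x)) for x > 0, where f, g are continuous and there is y* ∈ ℝ such that g(x, y) > 0 whenever y > y* and g(x, y) < 0 whenever y < y* (for all x > 0). If x₀ > 0 satisfies y'(x₀) = 0 and y(x₀) > y*, then y'(x) < 0 for all x ∈ (0, x₀), y'(x) > 0 for all x > x₀, and y(x) > y(x₀) for all x ≠ x₀. -/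
open Set

lemma sign_near (h : ℝ → ℝ) (a D : ℝ) (hD : 0 < D) (hh : HasDerivAt h D a) (ha : h a = 0) :
    ∃ ε > 0, (∀ t, a - ε < t → t < a → h t < 0) ∧ (∀ t, a < t → t < a + ε → 0 < h t) := by
  have hslope := hasDerivAt_iff_tendsto_slope.1 hh
  have hev : ∀ᶠ t in nhdsWithin a {a}ᶜ, 0 < slope h a t :=
    hslope.eventually (eventually_gt_nhds hD)
  obtain ⟨ε, hε, hball⟩ := (Metric.nhdsWithin_basis_ball.eventually_iff).1 hev
  refine ⟨ε, hε, ?_, ?_⟩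
  · intro t ht1 ht2
    have hmem : t ∈ Metric.ball a ε ∩ {a}ᶜ := by
      constructor
      · rw [Metric.mem_ball, Real.dist_eq, abs_lt]; constructor <;> linarith
      · simp only [mem_compl_iff, mem_singleton_iff]; intro hc; linarith [hc ▸ ht2]
    have hs := hball hmem
    rw [slope_def_field] at hs
    have : h t / (t - a) > 0 := by
      simpa [ha] using hs
    by_contra hcon
    push_neg at hcon
    have : h t / (t - a) ≤ 0 := div_nonpos_of_nonneg_of_nonpos (by linarith [hcon]) (by linarith) |>.trans_eq rfl
    · linarith
  · intro t ht1 ht2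
    have hmem : t ∈ Metric.ball a ε ∩ {a}ᶜ := by
      constructor
      · rw [Metric.mem_ball, Real.dist_eq, abs_lt]; constructor <;> linarith
      · simp only [mem_compl_iff, mem_singleton_iff]; intro hc; linarith [hc ▸ ht1]
    have hs := hball hmem
    rw [slope_def_field] at hs
    have h2 : 0 < h t / (t - a) := by simpa [ha] using hs
    have h3 : 0 < t - a := by linarith
    nlinarith [div_mul_cancel₀ (h t) (ne_of_gt h3)]

/-- Lemma 3.1 (first alternative): if `y'(x₀) = 0` and `y(x₀) > y*`, then `y'` is
negative before `x₀`, positive after, and `y > y(x₀)` away from `x₀`. -/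
theorem stmt_1 (y f : ℝ → ℝ) (g : ℝ → ℝ → ℝ) (ystar : ℝ)
    (hycont : ContinuousOn y (Set.Ici 0))
    (hyC2 : ContDiffOn ℝ 2 y (Set.Ioi 0))
    (hnonconst : ¬ ∀ x ∈ Set.Ici (0:ℝ), y x = y 0)
    (hf : ContinuousOn f (Set.Ioi 0))
    (hg : ContinuousOn (fun p : ℝ × ℝ => g p.1 p.2) (Set.Ioi 0 ×ˢ Set.univ))
    (hode : ∀ x ∈ Set.Ioi (0:ℝ),
      x ^ 2 * deriv (deriv y) x = f x * deriv y x + g x (y x))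
    (hgpos : ∀ x ∈ Set.Ioi (0:ℝ), ∀ z : ℝ, ystar < z → 0 < g x z)
    (hgneg : ∀ x ∈ Set.Ioi (0:ℝ), ∀ z : ℝ, z < ystar → g x z < 0)
    (x₀ : ℝ) (hx₀ : 0 < x₀) (hcrit : deriv y x₀ = 0) (habove : ystar < y x₀) :
    (∀ x ∈ Set.Ioo 0 x₀, deriv y x < 0) ∧
    (∀ x, x₀ < x → 0 < deriv y x) ∧
    (∀ x ∈ Set.Ioi (0:ℝ), x ≠ x₀ → y x₀ < y x) := by
  have hC1 : ContDiffOn ℝ 1 (deriv y) (Ioi 0) :=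
    hyC2.deriv_of_isOpen isOpen_Ioi (by norm_num)
  have hcont' : ContinuousOn (deriv y) (Ioi 0) := hC1.continuousOn
  have hycont' : ContinuousOn y (Ioi 0) := hyC2.continuousOn
  have hdiff : ∀ x ∈ Ioi (0:ℝ), HasDerivAt (deriv y) (deriv (deriv y) x) x := fun x hx =>
    (((hC1.differentiableOn one_ne_zero) x hx).differentiableAt
      (isOpen_Ioi.mem_nhds hx)).hasDerivAt
  have key : ∀ a, 0 < a → deriv y a = 0 → ystar < y a →
      ∃ ε > 0, (∀ t, a - ε < t → t < a → deriv y t < 0) ∧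
        (∀ t, a < t → t < a + ε → 0 < deriv y t) := by
    intro a ha h0 hy
    have hgp : 0 < g a (y a) := hgpos a ha _ hy
    have heq := hode a ha
    rw [h0, mul_zero, zero_add] at heq
    have ha2 : (0:ℝ) < a ^ 2 := by positivity
    have hD : 0 < deriv (deriv y) a := by nlinarith
    exact sign_near (deriv y) a _ hD (hdiff a ha) h0
  have part1 : ∀ x ∈ Ioo (0:ℝ) x₀, deriv y x < 0 := by
    by_contra hcon
    push_neg at hcon
    obtain ⟨b, hb, hb2⟩ := hcon
    set S : Set ℝ := {x | 0 < x ∧ x < x₀ ∧ 0 ≤ deriv y x} with hSdef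
    have hbS : b ∈ S := ⟨hb.1, hb.2, hb2⟩
    have hbdd : BddAbove S := ⟨x₀, fun s hs => le_of_lt hs.2.1⟩
    set x₁ := sSup S with hx₁def
    obtain ⟨ε, hε, hl, _⟩ := key x₀ hx₀ hcrit habove
    have hSle : ∀ s ∈ S, s ≤ x₀ - ε := by
      intro s hs
      by_contra hc; push_neg at hc
      exact absurd (hl s hc hs.2.1) (not_lt.2 hs.2.2)
    have hx₁lt : x₁ < x₀ := lt_of_le_of_lt (csSup_le ⟨b, hbS⟩ hSle) (by linarith)
    have hx₁pos : 0 < x₁ := lt_of_lt_of_le hb.1 (le_csSup hbdd hbS)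
    have hneg : ∀ t, x₁ < t → t < x₀ → deriv y t < 0 := by
      intro t h1 h2
      by_contra hc; push_neg at hc
      exact absurd (le_csSup hbdd ⟨lt_trans hx₁pos h1, h2, hc⟩) (not_le.2 h1)
    have hca : ContinuousAt (deriv y) x₁ :=
      hcont'.continuousAt (isOpen_Ioi.mem_nhds hx₁pos)
    have hd0 : deriv y x₁ = 0 := by
      have hclos : x₁ ∈ closure (Ioo x₁ x₀) := by
        rw [closure_Ioo (ne_of_lt hx₁lt)]; exact ⟨le_rfl, le_of_lt hx₁lt⟩
      have hnb : (nhdsWithin x₁ (Ioo x₁ x₀)).NeBot :=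
        mem_closure_iff_nhdsWithin_neBot.1 hclos
      have hcw : ContinuousWithinAt (deriv y) (Ioo x₁ x₀) x₁ := hca.continuousWithinAt
      have hle : deriv y x₁ ≤ 0 :=
        le_of_tendsto hcw.tendsto
          (eventually_nhdsWithin_of_forall fun t ht => (hneg t ht.1 ht.2).le)
      have hge : 0 ≤ deriv y x₁ := by
        by_contra hc; push_neg at hc
        have hev : ∀ᶠ t in nhds x₁, deriv y t < 0 := hca.eventually (eventually_lt_nhds hc)
        obtain ⟨δ, hδ, hball⟩ := Metric.eventually_nhds_iff.1 hev
        have : ∀ s ∈ S, s ≤ x₁ - δ := by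
          intro s hs
          by_contra hc2; push_neg at hc2
          have hsle : s ≤ x₁ := le_csSup hbdd hs
          have : deriv y s < 0 := hball (by rw [Real.dist_eq, abs_lt]; constructor <;> linarith)
          linarith [hs.2.2]
        have := csSup_le ⟨b, hbS⟩ this
        linarith
      linarith
    have hanti : StrictAntiOn y (Icc x₁ x₀) := by
      apply strictAntiOn_of_deriv_neg (convex_Icc _ _)
        (hycont'.mono (fun t ht => lt_of_lt_of_le hx₁pos ht.1))
      intro t ht
      rw [interior_Icc] at ht
      exact hneg t ht.1 ht.2
    have hy1 : ystar < y x₁ :=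
      lt_trans habove (hanti ⟨le_rfl, le_of_lt hx₁lt⟩ ⟨le_of_lt hx₁lt, le_rfl⟩ hx₁lt)
    obtain ⟨ε', hε', _, hr'⟩ := key x₁ hx₁pos hd0 hy1
    set t0 := (x₁ + min x₀ (x₁ + ε')) / 2 with ht0def
    have h1 : x₁ < t0 := by
      have : x₁ < min x₀ (x₁ + ε') := lt_min hx₁lt (by linarith)
      rw [ht0def]; linarith
    have h2 : t0 < x₀ := by
      have := min_le_left x₀ (x₁ + ε')
      rw [ht0def]; linarith
    have h3 : t0 < x₁ + ε' := by
      have := min_le_right x₀ (x₁ + ε')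
      rw [ht0def]; linarith
    exact absurd (hr' t0 h1 h3) (not_lt.2 (hneg t0 h1 h2).le)
  have part2 : ∀ x, x₀ < x → 0 < deriv y x := by
    by_contra hcon
    push_neg at hcon
    obtain ⟨b, hb, hb2⟩ := hcon
    set S : Set ℝ := {x | x₀ < x ∧ deriv y x ≤ 0} with hSdef
    have hbS : b ∈ S := ⟨hb, hb2⟩
    have hbdd : BddBelow S := ⟨x₀, fun s hs => le_of_lt hs.1⟩
    set x₁ := sInf S with hx₁def
    obtain ⟨ε, hε, _, hr⟩ := key x₀ hx₀ hcrit habove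
    have hSge : ∀ s ∈ S, x₀ + ε ≤ s := by
      intro s hs
      by_contra hc; push_neg at hc
      exact absurd (hr s hs.1 hc) (not_lt.2 hs.2)
    have hx₁gt : x₀ < x₁ := lt_of_lt_of_le (by linarith) (le_csInf ⟨b, hbS⟩ hSge)
    have hx₁pos : 0 < x₁ := lt_trans hx₀ hx₁gt
    have hpos : ∀ t, x₀ < t → t < x₁ → 0 < deriv y t := by
      intro t h1 h2
      by_contra hc; push_neg at hc
      exact absurd (csInf_le hbdd ⟨h1, hc⟩) (not_le.2 h2)
    have hca : ContinuousAt (deriv y) x₁ :=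
      hcont'.continuousAt (isOpen_Ioi.mem_nhds hx₁pos)
    have hd0 : deriv y x₁ = 0 := by
      have hclos : x₁ ∈ closure (Ioo x₀ x₁) := by
        rw [closure_Ioo (ne_of_lt hx₁gt)]; exact ⟨le_of_lt hx₁gt, le_rfl⟩
      have hnb : (nhdsWithin x₁ (Ioo x₀ x₁)).NeBot :=
        mem_closure_iff_nhdsWithin_neBot.1 hclos
      have hcw : ContinuousWithinAt (deriv y) (Ioo x₀ x₁) x₁ := hca.continuousWithinAt
      have hge : 0 ≤ deriv y x₁ :=
        ge_of_tendsto hcw.tendsto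
          (eventually_nhdsWithin_of_forall fun t ht => (hpos t ht.1 ht.2).le)
      have hle : deriv y x₁ ≤ 0 := by
        by_contra hc; push_neg at hc
        have hev : ∀ᶠ t in nhds x₁, 0 < deriv y t := hca.eventually (eventually_gt_nhds hc)
        obtain ⟨δ, hδ, hball⟩ := Metric.eventually_nhds_iff.1 hev
        have : ∀ s ∈ S, x₁ + δ ≤ s := by
          intro s hs
          by_contra hc2; push_neg at hc2
          have hsge : x₁ ≤ s := csInf_le hbdd hs
          have : 0 < deriv y s := hball (by rw [Real.dist_eq, abs_lt]; constructor <;> linarith)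
          linarith [hs.2]
        have := le_csInf ⟨b, hbS⟩ this
        linarith
      linarith
    have hmono : StrictMonoOn y (Icc x₀ x₁) := by
      apply strictMonoOn_of_deriv_pos (convex_Icc _ _)
        (hycont'.mono (fun t ht => lt_of_lt_of_le hx₀ ht.1))
      intro t ht
      rw [interior_Icc] at ht
      exact hpos t ht.1 ht.2
    have hy1 : ystar < y x₁ :=
      lt_trans habove (hmono ⟨le_rfl, le_of_lt hx₁gt⟩ ⟨le_of_lt hx₁gt, le_rfl⟩ hx₁gt)
    obtain ⟨ε', hε', hl', _⟩ := key x₁ hx₁pos hd0 hy1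
    set t0 := (max x₀ (x₁ - ε') + x₁) / 2 with ht0def
    have h1 : t0 < x₁ := by
      have : max x₀ (x₁ - ε') < x₁ := max_lt hx₁gt (by linarith)
      rw [ht0def]; linarith
    have h2 : x₀ < t0 := by
      have := le_max_left x₀ (x₁ - ε')
      rw [ht0def]; linarith
    have h3 : x₁ - ε' < t0 := by
      have := le_max_right x₀ (x₁ - ε')
      rw [ht0def]; linarith
    exact absurd (hl' t0 h3 h1) (not_lt.2 (hpos t0 h2 h1).le)
  refine ⟨part1, part2, ?_⟩
  intro x hx hne
  rcases lt_or_gt_of_ne hne with h | h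
  · have hanti : StrictAntiOn y (Icc x x₀) := by
      apply strictAntiOn_of_deriv_neg (convex_Icc _ _)
        (hycont'.mono (fun t ht => lt_of_lt_of_le hx ht.1))
      intro t ht
      rw [interior_Icc] at ht
      exact part1 t ⟨lt_trans hx ht.1, ht.2⟩
    exact hanti ⟨le_rfl, le_of_lt h⟩ ⟨le_of_lt h, le_rfl⟩ h
  · have hmono : StrictMonoOn y (Icc x₀ x) := by
      apply strictMonoOn_of_deriv_pos (convex_Icc _ _)
        (hycont'.mono (fun t ht => lt_of_lt_of_le hx₀ ht.1))
      intro t ht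
      rw [interior_Icc] at ht
      exact part2 t ht.1
    exact hmono ⟨le_rfl, le_of_lt h⟩ ⟨le_of_lt h, le_rfl⟩ h
end

section
/- Let u : [0,∞) → ℝ be C¹ on [0,∞) and C³ on (0,∞), with u(0) = 0, u'(0) = 1, and u'''(x) > 0 for all x > 0. Then for every x > 0 one has 1 + u'(x) > 2·u(x)/x. -/
/-- Corollary 3.4 (speculative-attack inequality): `1 + u'(x) > 2 u(x)/x`. -/
theorem stmt_3 (u : ℝ → ℝ)
    (hC1 : ContDiffOn ℝ 1 u (Set.Ici 0))
    (hC3 : ContDiffOn ℝ 3 u (Set.Ioi 0))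
    (hu0 : u 0 = 0)
    (hu'0 : derivWithin u (Set.Ici 0) 0 = 1)
    (hu''' : ∀ x ∈ Set.Ioi (0:ℝ), 0 < deriv (deriv (deriv u)) x) :
    ∀ x ∈ Set.Ioi (0:ℝ), 2 * u x / x < 1 + deriv u x := by
  set v := derivWithin u (Set.Ici 0) with hv
  have hIoi : IsOpen (Set.Ioi (0:ℝ)) := isOpen_Ioi
  have hveq : ∀ x ∈ Set.Ioi (0:ℝ), v x = deriv u x := by
    intro x hx
    exact derivWithin_of_mem_nhds (Filter.mem_of_superset (hIoi.mem_nhds hx) Set.Ioi_subset_Ici_self)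
  have hC2 : ContDiffOn ℝ 2 (deriv u) (Set.Ioi 0) := by
    exact hC3.deriv_of_isOpen hIoi (show (2:WithTop ℕ∞)+1 ≤ 3 by norm_num)
  have hC1'' : ContDiffOn ℝ 1 (deriv (deriv u)) (Set.Ioi 0) := by
    exact hC2.deriv_of_isOpen hIoi (show (1:WithTop ℕ∞)+1 ≤ 2 by norm_num)
  have hmono : StrictMonoOn (deriv (deriv u)) (Set.Ioi 0) := by
    apply strictMonoOn_of_deriv_pos (convex_Ioi 0) hC1''.continuousOn
    rw [interior_Ioi]; exact hu'''
  have hvcont : ContinuousOn v (Set.Ici 0) :=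
    hC1.continuousOn_derivWithin (uniqueDiffOn_Ici 0) le_rfl
  have hdiff1 : ∀ x ∈ Set.Ioi (0:ℝ), DifferentiableAt ℝ u x := fun x hx =>
    (hC3.differentiableOn (by norm_num)).differentiableAt (hIoi.mem_nhds hx)
  have hdiff2 : ∀ x ∈ Set.Ioi (0:ℝ), DifferentiableAt ℝ (deriv u) x := fun x hx =>
    (hC2.differentiableOn (by norm_num)).differentiableAt (hIoi.mem_nhds hx)
  -- key: x * u''(x) > u'(x) - 1 on (0, ∞)
  have hkey : ∀ x ∈ Set.Ioi (0:ℝ), deriv u x - 1 < x * deriv (deriv u) x := by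
    intro x hx
    have hx0 : (0:ℝ) < x := hx
    have hvc : ContinuousOn v (Set.Icc 0 x) :=
      hvcont.mono (Set.Icc_subset_Ici_self)
    have hvd : ∀ c ∈ Set.Ioo (0:ℝ) x, HasDerivAt v (deriv (deriv u) c) c := by
      intro c hc
      have hc' : c ∈ Set.Ioi (0:ℝ) := hc.1
      have h1 : HasDerivAt (deriv u) (deriv (deriv u) c) c := (hdiff2 c hc').hasDerivAt
      apply h1.congr_of_eventuallyEq
      filter_upwards [hIoi.mem_nhds hc'] with y hy
      exact hveq y hy
    obtain ⟨c, hc, hceq⟩ := exists_hasDerivAt_eq_slope v (fun c => deriv (deriv u) c) hx0 hvc hvd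
    have hv0 : v 0 = 1 := hu'0
    have hlt : deriv (deriv u) c < deriv (deriv u) x := hmono hc.1 hx hc.2
    have : (v x - 1) / x < deriv (deriv u) x := by
      rw [hv0] at hceq
      calc (v x - 1) / x = (v x - 1) / (x - 0) := by ring_nf
        _ = deriv (deriv u) c := hceq.symm
        _ < deriv (deriv u) x := hlt
    rw [hveq x hx] at this
    have := (div_lt_iff₀ hx0).mp this
    linarith [this]
  -- G is strictly increasing on [0, ∞)
  set G : ℝ → ℝ := fun y => y * v y + y - 2 * u y with hG
  have hGcont : ContinuousOn G (Set.Ici 0) := by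
    apply ContinuousOn.sub
    · exact (continuousOn_id.mul hvcont).add continuousOn_id
    · exact continuousOn_const.mul hC1.continuousOn
  have hGderiv : ∀ x ∈ Set.Ioi (0:ℝ), 0 < deriv G x := by
    intro x hx
    have hd : HasDerivAt (fun y => y * deriv u y + y - 2 * u y)
        (1 * deriv u x + x * deriv (deriv u) x + 1 - 2 * deriv u x) x := by
      exact (((hasDerivAt_id x).mul (hdiff2 x hx).hasDerivAt).add (hasDerivAt_id x)).sub
        ((hdiff1 x hx).hasDerivAt.const_mul 2)
    have hGd : HasDerivAt G (1 * deriv u x + x * deriv (deriv u) x + 1 - 2 * deriv u x) x := by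
      apply hd.congr_of_eventuallyEq
      filter_upwards [hIoi.mem_nhds hx] with y hy
      simp [hG, hveq y hy]
    rw [hGd.deriv]
    have := hkey x hx
    linarith
  have hGmono : StrictMonoOn G (Set.Ici 0) := by
    apply strictMonoOn_of_deriv_pos (convex_Ici 0) hGcont
    rw [interior_Ici]; exact hGderiv
  intro x hx
  have hx0 : (0:ℝ) < x := hx
  have hG0 : G 0 = 0 := by simp [hG, hu0]
  have := hGmono (Set.self_mem_Ici) (le_of_lt hx0) hx0
  rw [hG0] at this
  have hGx : 0 < x * deriv u x + x - 2 * u x := by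
    have h2 : 0 < x * v x + x - 2 * u x := this
    rwa [hveq x hx] at h2
  rw [div_lt_iff₀ hx0]
  nlinarith
end

section
/- Let c > 0 and let V : (−∞, T] → ℝ be a differentiable function satisfying V'(t) = p(t) + q(t)V(t) − cV(t)² with p(t) → 0 and q(t) → 0 as t → −∞. Then V(t) → 0 as t → −∞. -/
open Set Filter

/-- Core blow-up lemma: if `f t₀ ≤ -ε` and `f' ≤ -(c/2) f²` whenever `f ≤ -ε`
on the interval `[t₀, t₀ + 3/(c ε)]`, we get a contradiction. -/
lemma riccati_core (c ε : ℝ) (hc : 0 < c) (hε : 0 < ε) (f f' : ℝ → ℝ) (t₀ : ℝ)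
    (hd : ∀ t ∈ Icc t₀ (t₀ + 3 / (c * ε)), HasDerivAt f (f' t) t)
    (hbound : ∀ t ∈ Icc t₀ (t₀ + 3 / (c * ε)), f t ≤ -ε → f' t ≤ -(c / 2) * f t ^ 2)
    (h0 : f t₀ ≤ -ε) : False := by
  set b := t₀ + 3 / (c * ε) with hb
  have hcε : 0 < c * ε := mul_pos hc hε
  have hL : 0 < 3 / (c * ε) := by positivity
  have htb : t₀ ≤ b := by rw [hb]; linarith
  -- Step 1: f stays ≤ -ε on [t₀, b]
  have hstay : ∀ t ∈ Icc t₀ b, f t ≤ -ε := by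
    intro x hx
    refine image_le_of_deriv_right_lt_deriv_boundary (B := fun _ => -ε) (B' := fun _ => 0)
      (fun t ht => (hd t ht).continuousAt.continuousWithinAt)
      (fun t ht => (hd t (Ico_subset_Icc_self ht)).hasDerivWithinAt)
      h0 (fun _ => hasDerivAt_const _ _) ?_ hx
    intro t ht hft
    have hftv : f t = -ε := hft
    have h1 := hbound t (Ico_subset_Icc_self ht) (le_of_eq hftv)
    rw [hftv] at h1
    show f' t < 0
    nlinarith [mul_pos hc (mul_pos hε hε)]
  have hneg : ∀ t ∈ Icc t₀ b, f t < 0 := fun t ht => lt_of_le_of_lt (hstay t ht) (by linarith)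
  have hne : ∀ t ∈ Icc t₀ b, f t ≠ 0 := fun t ht => ne_of_lt (hneg t ht)
  -- Step 2: g = 1/f - (c/2) t is monotone on [t₀, b]
  set g : ℝ → ℝ := fun t => (f t)⁻¹ - c / 2 * t with hg
  have hgd : ∀ t ∈ Icc t₀ b, HasDerivAt g (-f' t / f t ^ 2 - c / 2) t := by
    intro t ht
    have h1 : HasDerivAt (fun s => c / 2 * s) (c / 2) t := by
      simpa using (hasDerivAt_id t).const_mul (c / 2)
    simpa using ((hd t ht).fun_inv (hne t ht)).fun_sub h1
  have hgmono : MonotoneOn g (Icc t₀ b) := by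
    apply monotoneOn_of_deriv_nonneg (convex_Icc _ _)
      (fun t ht => (hgd t ht).continuousAt.continuousWithinAt)
      (fun t ht => ((hgd t (interior_subset ht)).differentiableAt).differentiableWithinAt)
    intro t ht
    have ht' : t ∈ Icc t₀ b := interior_subset ht
    rw [(hgd t ht').deriv]
    have hft := hstay t ht'
    have hb' := hbound t ht' hft
    have hsq : 0 < f t ^ 2 := by nlinarith
    rw [sub_nonneg, le_div_iff₀ hsq]
    nlinarith
  -- Step 3: derive the contradiction
  have hmem₀ : t₀ ∈ Icc t₀ b := left_mem_Icc.2 htb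
  have hmemb : b ∈ Icc t₀ b := right_mem_Icc.2 htb
  have hgle : g t₀ ≤ g b := hgmono hmem₀ hmemb htb
  have hfb : f b ≤ -ε := hstay b hmemb
  have hfb0 : f b < 0 := hneg b hmemb
  have hf00 : f t₀ < 0 := hneg t₀ hmem₀
  have hinvb : (f b)⁻¹ < 0 := inv_lt_zero.2 hfb0
  have hinv0 : -ε⁻¹ ≤ (f t₀)⁻¹ := by
    have h1 : f t₀ * (f t₀)⁻¹ = 1 := mul_inv_cancel₀ (ne_of_lt hf00)
    have h2 : ε * ε⁻¹ = 1 := mul_inv_cancel₀ (ne_of_gt hε)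
    have hinv00 : (f t₀)⁻¹ < 0 := inv_lt_zero.2 hf00
    nlinarith
  have hdiff : c / 2 * (b - t₀) = 3 / (2 * ε) := by
    rw [hb]
    field_simp
    ring
  have hεinv : 0 < ε⁻¹ := inv_pos.2 hε
  have h3 : (3 : ℝ) / (2 * ε) = 3 / 2 * ε⁻¹ := by ring
  -- g t₀ ≤ g b gives (f b)⁻¹ ≥ (f t₀)⁻¹ + 3/(2ε) ≥ -ε⁻¹ + (3/2)ε⁻¹ > 0, contradiction
  have : (f t₀)⁻¹ - c / 2 * t₀ ≤ (f b)⁻¹ - c / 2 * b := hgle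
  nlinarith

/-- Lemma 2.1 (core): a globally defined solution of the Riccati-type equation
`V' = p + qV - cV²` with `p, q → 0` at `-∞` satisfies `V → 0` at `-∞`. -/
theorem stmt_6 (c T : ℝ) (hc : 0 < c) (V p q : ℝ → ℝ)
    (hpcont : ContinuousOn p (Set.Iic T))
    (hqcont : ContinuousOn q (Set.Iic T))
    (hV : ∀ t ≤ T, HasDerivAt V (p t + q t * V t - c * V t ^ 2) t)
    (hp0 : Filter.Tendsto p Filter.atBot (nhds 0))
    (hq0 : Filter.Tendsto q Filter.atBot (nhds 0)) :
    Filter.Tendsto V Filter.atBot (nhds 0) := by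
  rw [Metric.tendsto_nhds]
  intro ε hε
  -- Get bounds for p and q
  have hp' : ∀ᶠ t in atBot, |p t| ≤ c * ε ^ 2 / 4 := by
    have := Metric.tendsto_nhds.1 hp0 (c * ε ^ 2 / 4) (by positivity)
    filter_upwards [this] with t ht
    rw [Real.dist_eq, sub_zero] at ht
    exact le_of_lt ht
  have hq' : ∀ᶠ t in atBot, |q t| ≤ c * ε / 4 := by
    have := Metric.tendsto_nhds.1 hq0 (c * ε / 4) (by positivity)
    filter_upwards [this] with t ht
    rw [Real.dist_eq, sub_zero] at ht
    exact le_of_lt ht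
  obtain ⟨M₀, hM₀⟩ := eventually_atBot.1 (hp'.and (hq'.and (eventually_le_atBot T)))
  set L := 3 / (c * ε) with hLdef
  have hcε : 0 < c * ε := mul_pos hc hε
  have hL : 0 < L := by positivity
  set M₁ := M₀ - L with hM₁def
  -- Claim B: V t > -ε for t ≤ M₁
  have claimB : ∀ t₀ ≤ M₁, -ε < V t₀ := by
    intro t₀ ht₀
    by_contra hcon
    push_neg at hcon
    refine riccati_core c ε hc hε V (fun t => p t + q t * V t - c * V t ^ 2) t₀ ?_ ?_ hcon
    · intro t ht
      have : t ≤ T := by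
        have := (hM₀ t (by simp only [mem_Icc] at ht; linarith)).2.2
        exact this
      exact hV t this
    · intro t ht hVt
      have htM : t ≤ M₀ := by simp only [mem_Icc] at ht; linarith
      obtain ⟨hpb, hqb, _⟩ := hM₀ t htM
      have h1 : p t ≤ c * ε ^ 2 / 4 := le_trans (le_abs_self _) hpb
      have h2 : q t * V t ≤ c * ε / 4 * (-V t) := by
        have : q t * V t ≤ |q t| * |V t| := by
          calc q t * V t ≤ |q t * V t| := le_abs_self _
          _ = |q t| * |V t| := abs_mul _ _
        have hVabs : |V t| = -V t := abs_of_nonpos (by linarith)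
        rw [hVabs] at this
        have h3 : q t * V t ≤ |q t| * (-V t) := this
        nlinarith [abs_nonneg (q t)]
      have hx : ε ≤ -V t := by linarith
      have hx0 : 0 < -V t := lt_of_lt_of_le hε hx
      have e1 : c * ε ^ 2 / 4 ≤ c * V t ^ 2 / 4 := by
        nlinarith [mul_nonneg hc.le (mul_nonneg (sub_nonneg.2 hx)
          (le_of_lt (show (0:ℝ) < -V t + ε by linarith)))]
      have e2 : c * ε / 4 * (-V t) ≤ c * V t ^ 2 / 4 := by
        nlinarith [mul_nonneg (mul_nonneg hc.le hx0.le) (sub_nonneg.2 hx)]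
      show p t + q t * V t - c * V t ^ 2 ≤ -(c / 2) * V t ^ 2
      linarith
  -- Claim C: V t < ε for t ≤ M₁
  have claimC : ∀ t₁ ≤ M₁, V t₁ < ε := by
    intro t₁ ht₁
    by_contra hcon
    push_neg at hcon
    -- reflect: f s = -V (2 t₁ - s)
    have h0' : (fun s => -V (2 * t₁ - s)) t₁ ≤ -ε := by
      show -V (2 * t₁ - t₁) ≤ -ε
      rw [show 2 * t₁ - t₁ = t₁ by ring]
      linarith
    refine riccati_core c ε hc hε (fun s => -V (2 * t₁ - s))
      (fun s => p (2 * t₁ - s) + q (2 * t₁ - s) * V (2 * t₁ - s) - c * V (2 * t₁ - s) ^ 2)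
      t₁ ?_ ?_ h0'
    · intro s hs
      have hu : 2 * t₁ - s ≤ T := by
        simp only [mem_Icc] at hs
        have h1 : 2 * t₁ - s ≤ t₁ := by linarith
        have := (hM₀ (2 * t₁ - s) (by linarith)).2.2
        exact this
      have hinner : HasDerivAt (fun s : ℝ => 2 * t₁ - s) (-1) s := by
        simpa using (hasDerivAt_const s (2 * t₁)).fun_sub (hasDerivAt_id s)
      have hcomp := (hV (2 * t₁ - s) hu).comp s hinner
      have : HasDerivAt (fun s => -V (2 * t₁ - s)) _ s := hcomp.fun_neg
      convert this using 1
      ring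
    · intro s hs hVs
      simp only [mem_Icc] at hs
      set u := 2 * t₁ - s with hu
      have huM : u ≤ M₀ := by rw [hu]; linarith
      obtain ⟨hpb, hqb, _⟩ := hM₀ u huM
      have hVu : ε ≤ V u := by
        have : -V u ≤ -ε := hVs
        linarith
      have h1 : p u ≤ c * ε ^ 2 / 4 := le_trans (le_abs_self _) hpb
      have h2 : q u * V u ≤ c * ε / 4 * V u := by
        have hq1 : q u ≤ c * ε / 4 := le_trans (le_abs_self _) hqb
        nlinarith
      have hx0 : 0 < V u := lt_of_lt_of_le hε hVu
      have e1 : c * ε ^ 2 / 4 ≤ c * V u ^ 2 / 4 := by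
        nlinarith [mul_nonneg hc.le (mul_nonneg (sub_nonneg.2 hVu)
          (le_of_lt (show (0:ℝ) < V u + ε by linarith)))]
      have e2 : c * ε / 4 * V u ≤ c * V u ^ 2 / 4 := by
        nlinarith [mul_nonneg (mul_nonneg hc.le hx0.le) (sub_nonneg.2 hVu)]
      have hgoal : p u + q u * V u - c * V u ^ 2 ≤ -(c / 2) * (-V u) ^ 2 := by
        have : (-V u) ^ 2 = V u ^ 2 := by ring
        rw [this]; linarith
      simpa using hgoal
  -- conclude
  rw [eventually_atBot]
  refine ⟨M₁, fun t ht => ?_⟩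
  rw [Real.dist_eq, sub_zero, abs_lt]
  exact ⟨claimB t ht, claimC t ht⟩
end

section
/- Let u : [0,∞) → ℝ be continuous, C² on (0,∞), bounded, satisfy the ODE x²u'' = axu' + bu − c(u'−1)² on (0,∞) with c > 0 and b ≠ 0, nonconstant, and eventually monotone. Then u(x) → c/b as x → ∞. -/
open Filter Set Real

/-- If `f` starts above `y` and has positive derivative whenever it touches `y`
(after `t₁`), then it stays above `y`. -/
lemma cross_lemma (f g : ℝ → ℝ) (hfd : ∀ t, HasDerivAt f (g t) t) (y t₁ : ℝ)
    (h1 : y < f t₁) (hg : ∀ t, t₁ ≤ t → f t = y → 0 < g t) :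
    ∀ t, t₁ ≤ t → y < f t := by
  have hfc : Continuous f := by
    refine continuous_iff_continuousAt.2 fun t => (hfd t).continuousAt
  by_contra h
  push_neg at h
  obtain ⟨t', ht'1, ht'2⟩ := h
  set B : Set ℝ := {t : ℝ | t₁ ≤ t ∧ f t ≤ y} with hB
  have hBne : B.Nonempty := ⟨t', ht'1, ht'2⟩
  have hBc : IsClosed B := by
    have : B = Set.Ici t₁ ∩ f ⁻¹' Set.Iic y := rfl
    rw [this]
    exact isClosed_Ici.inter (isClosed_Iic.preimage hfc)
  have hBb : BddBelow B := ⟨t₁, fun x hx => hx.1⟩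
  set t₂ := sInf B with ht₂
  have ht₂B : t₂ ∈ B := hBc.csInf_mem hBne hBb
  have h12 : t₁ < t₂ := by
    rcases lt_or_eq_of_le ht₂B.1 with h | h
    · exact h
    · exact absurd ht₂B.2 (not_le.2 (h ▸ h1))
  have hlt : ∀ s, t₁ ≤ s → s < t₂ → y < f s := by
    intro s hs1 hs2
    by_contra hh
    exact absurd (csInf_le hBb ⟨hs1, not_lt.1 hh⟩) (not_le.2 hs2)
  have hft₂ : f t₂ = y := by
    refine le_antisymm ht₂B.2 ?_
    have htd : Filter.Tendsto f (nhdsWithin t₂ (Set.Iio t₂)) (nhds (f t₂)) :=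
      (hfc.tendsto t₂).mono_left nhdsWithin_le_nhds
    refine ge_of_tendsto htd ?_
    filter_upwards [Ioo_mem_nhdsLT_of_mem (Set.mem_Ioc.2 ⟨h12, le_refl t₂⟩)] with s hs
    exact (hlt s hs.1.le hs.2).le
  have hgpos : 0 < g t₂ := hg t₂ (le_of_lt h12) hft₂
  have hslope := hasDerivAt_iff_tendsto_slope.1 (hfd t₂)
  have hslope' : Filter.Tendsto (slope f t₂) (nhdsWithin t₂ (Set.Iio t₂)) (nhds (g t₂)) :=
    hslope.mono_left (nhdsWithin_mono t₂ (fun s hs => ne_of_lt hs))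
  have hev : ∀ᶠ s in nhdsWithin t₂ (Set.Iio t₂), 0 < slope f t₂ s :=
    hslope'.eventually (eventually_gt_nhds hgpos)
  have hev2 : ∀ᶠ s in nhdsWithin t₂ (Set.Iio t₂), y < f s := by
    filter_upwards [Ioo_mem_nhdsLT_of_mem (Set.mem_Ioc.2 ⟨h12, le_refl t₂⟩)] with s hs
    exact hlt s hs.1.le hs.2
  have hev3 : ∀ᶠ s in nhdsWithin t₂ (Set.Iio t₂), s ∈ Set.Iio t₂ :=
    eventually_mem_nhdsWithin
  obtain ⟨s, hs1, hs2, hs3⟩ := (hev.and (hev2.and hev3)).exists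
  rw [slope_def_field] at hs1
  have hnum : f s - f t₂ < 0 := by
    rcases div_pos_iff.1 hs1 with ⟨hp, hq⟩ | ⟨hp, hq⟩
    · exact absurd (Set.mem_Iio.1 hs3) (not_lt.2 (by linarith))
    · exact hp
  rw [hft₂] at hnum
  linarith

lemma grow_lemma (f g : ℝ → ℝ) (hfd : ∀ t, HasDerivAt f (g t) t) (t₁ e : ℝ)
    (hg : ∀ t, t₁ ≤ t → e ≤ g t) : ∀ t, t₁ ≤ t → f t₁ + e * (t - t₁) ≤ f t := by
  intro t ht
  set φ : ℝ → ℝ := fun s => f s - e * s with hφ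
  have hφd : ∀ s, HasDerivAt φ (g s - e) s := by
    intro s
    have h2 : HasDerivAt (fun y : ℝ => e * y) e s := by
      simpa using (hasDerivAt_id s).const_mul e
    exact (hfd s).sub h2
  have hmono : MonotoneOn φ (Set.Ici t₁) := by
    apply monotoneOn_of_deriv_nonneg (convex_Ici t₁)
    · exact (Differentiable.continuous (fun s => (hφd s).differentiableAt)).continuousOn
    · exact fun x _ => (hφd x).differentiableAt.differentiableWithinAt
    · intro x hx
      rw [interior_Ici] at hx
      rw [(hφd x).deriv]
      linarith [hg x hx.le]
  have h := hmono (Set.self_mem_Ici) (Set.mem_Ici.2 ht) ht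
  simp only [hφ] at h
  nlinarith [h]

/-- Key contradiction lemma: `W` has derivative `f`, `f` has derivative `g`;
if `g ≥ d > 0` whenever `|f| ≤ δ` (past `t₀`) and `f` is once small, then `W`
is unbounded above. -/
lemma key_lemma (f g W : ℝ → ℝ) (d δ t₀ M : ℝ) (hd : 0 < d) (hδ : 0 < δ)
    (hfd : ∀ t, HasDerivAt f (g t) t) (hW : ∀ t, HasDerivAt W (f t) t)
    (hg : ∀ t, t₀ ≤ t → |f t| ≤ δ → d ≤ g t)
    (hsmall : |f t₀| < δ) (hM : ∀ t, W t ≤ M) : False := by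
  have hA : ∀ t, t₀ ≤ t → -δ < f t := by
    apply cross_lemma f g hfd (-δ) t₀ (abs_lt.1 hsmall).1
    intro t ht hft
    refine lt_of_lt_of_le hd (hg t ht ?_)
    rw [hft, abs_neg, abs_of_pos hδ]
  have hB : ∃ t₁, t₀ ≤ t₁ ∧ δ < f t₁ := by
    by_contra h
    push_neg at h
    have hband : ∀ t, t₀ ≤ t → d ≤ g t := fun t ht =>
      hg t ht (abs_le.2 ⟨(hA t ht).le, h t ht⟩)
    have hgt : t₀ ≤ t₀ + 2 * δ / d + 1 := by
      have := div_pos (by linarith : (0:ℝ) < 2 * δ) hd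
      linarith
    have hgr := grow_lemma f g hfd t₀ d hband (t₀ + 2 * δ / d + 1) hgt
    have hdd : d * ((t₀ + 2 * δ / d + 1) - t₀) = 2 * δ + d := by
      field_simp
      ring
    rw [hdd] at hgr
    have hle := h _ hgt
    have hft₀ := (abs_lt.1 hsmall).1
    linarith
  obtain ⟨t₁, ht₁0, ht₁⟩ := hB
  have hC : ∀ t, t₁ ≤ t → δ < f t := by
    apply cross_lemma f g hfd δ t₁ ht₁
    intro t ht hft
    refine lt_of_lt_of_le hd (hg t (ht₁0.trans ht) ?_)
    rw [hft, abs_of_pos hδ]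
  have hgrow := grow_lemma W f hW t₁ δ (fun t ht => (hC t ht).le)
  set tb := t₁ + (M - W t₁) / δ + 1 with htb
  have h1 : t₁ ≤ tb := by
    have := div_nonneg (sub_nonneg.2 (hM t₁)) hδ.le
    rw [htb]; linarith
  have h2 := hgrow tb h1
  have h3 : δ * (tb - t₁) = (M - W t₁) + δ := by
    rw [htb]; field_simp; ring
  rw [h3] at h2
  linarith [hM tb]

/-- Lemma 3.2(i), case `b ≠ 0`: a bounded, nonconstant, eventually monotone
solution converges to `c/b` at infinity. -/
theorem stmt_16 (a b c : ℝ) (hc : 0 < c) (hb : b ≠ 0) (u : ℝ → ℝ)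
    (hcont : ContinuousOn u (Set.Ici 0))
    (hC2 : ContDiffOn ℝ 2 u (Set.Ioi 0))
    (hbdd : ∃ M : ℝ, ∀ x ∈ Set.Ici (0:ℝ), |u x| ≤ M)
    (hode : ∀ x ∈ Set.Ioi (0:ℝ),
      x ^ 2 * deriv (deriv u) x
        = a * x * deriv u x + b * u x - c * (deriv u x - 1) ^ 2)
    (hnonconst : ¬ ∀ x ∈ Set.Ici (0:ℝ), u x = u 0)
    (hmono : ∃ x₁ : ℝ, 0 ≤ x₁ ∧
      (MonotoneOn u (Set.Ici x₁) ∨ AntitoneOn u (Set.Ici x₁))) :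
    Filter.Tendsto u Filter.atTop (nhds (c / b)) := by
  obtain ⟨M, hM⟩ := hbdd
  obtain ⟨x₁, hx₁, hmc⟩ := hmono
  -- Step 1: u has a limit l at infinity
  have hlim : ∃ l, Tendsto u atTop (nhds l) := by
    rcases hmc with hm | hm
    · set v : ℝ → ℝ := fun x => u (max x x₁) with hv
      have hvm : Monotone v := fun x y hxy =>
        hm (le_max_right x x₁) (le_max_right y x₁) (max_le_max hxy le_rfl)
      have hvb : BddAbove (Set.range v) := by
        refine ⟨M, ?_⟩
        rintro z ⟨x, rfl⟩
        exact le_of_abs_le (hM _ (Set.mem_Ici.2 (le_trans hx₁ (le_max_right x x₁))))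
      refine ⟨⨆ x, v x, ?_⟩
      refine Filter.Tendsto.congr' ?_ (tendsto_atTop_ciSup hvm hvb)
      filter_upwards [eventually_ge_atTop x₁] with x hx
      simp [hv, max_eq_left hx]
    · set v : ℝ → ℝ := fun x => u (max x x₁) with hv
      have hvm : Antitone v := fun x y hxy =>
        hm (le_max_right x x₁) (le_max_right y x₁) (max_le_max hxy le_rfl)
      have hvb : BddBelow (Set.range v) := by
        refine ⟨-M, ?_⟩
        rintro z ⟨x, rfl⟩
        exact neg_le_of_abs_le (hM _ (Set.mem_Ici.2 (le_trans hx₁ (le_max_right x x₁))))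
      refine ⟨⨅ x, v x, ?_⟩
      refine Filter.Tendsto.congr' ?_ (tendsto_atTop_ciInf hvm hvb)
      filter_upwards [eventually_ge_atTop x₁] with x hx
      simp [hv, max_eq_left hx]
  obtain ⟨l, hl⟩ := hlim
  -- Step 2: it suffices that b * l - c = 0
  suffices hd0 : b * l - c = 0 by
    have hlc : l = c / b := by
      field_simp
      linarith
    exact hlc ▸ hl
  by_contra hd0ne
  -- setup: w(t) = u(exp t)
  set w : ℝ → ℝ := fun t => u (Real.exp t) with hw
  have hwl : Tendsto w atTop (nhds l) := hl.comp Real.tendsto_exp_atTop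
  have hu1 : ∀ x : ℝ, 0 < x → ContDiffAt ℝ 2 u x := fun x hx =>
    hC2.contDiffAt (isOpen_Ioi.mem_nhds hx)
  have hud : ∀ x : ℝ, 0 < x → HasDerivAt u (deriv u x) x := fun x hx =>
    ((hu1 x hx).differentiableAt (by norm_num)).hasDerivAt
  have hderivC : ContDiffOn ℝ 1 (deriv u) (Set.Ioi 0) :=
    hC2.deriv_of_isOpen isOpen_Ioi (by norm_num)
  have hudd : ∀ x : ℝ, 0 < x → HasDerivAt (deriv u) (deriv (deriv u) x) x := fun x hx =>
    ((hderivC.contDiffAt (isOpen_Ioi.mem_nhds hx)).differentiableAt (by norm_num)).hasDerivAt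
  set f : ℝ → ℝ := fun t => deriv u (Real.exp t) * Real.exp t with hf
  have hWd : ∀ t, HasDerivAt w (f t) t := by
    intro t
    exact (hud (Real.exp t) (Real.exp_pos t)).comp t (Real.hasDerivAt_exp t)
  set g : ℝ → ℝ := fun t =>
    (a + 1) * f t + b * w t - c * (f t * Real.exp (-t) - 1) ^ 2 with hgdef
  have hfd : ∀ t, HasDerivAt f (g t) t := by
    intro t
    have h1 := Real.hasDerivAt_exp t
    have h2 := (hudd (Real.exp t) (Real.exp_pos t)).comp t h1
    have h3 := h2.mul h1
    simp only [Function.comp_def] at h3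
    have hode' := hode (Real.exp t) (Set.mem_Ioi.2 (Real.exp_pos t))
    have hexp : Real.exp t * Real.exp (-t) = 1 := by
      rw [← Real.exp_add]; simp
    have hval : g t = deriv (deriv u) (Real.exp t) * Real.exp t * Real.exp t
        + deriv u (Real.exp t) * Real.exp t := by
      simp only [hgdef, hf, hw]
      have h4 : deriv u (Real.exp t) * Real.exp t * Real.exp (-t)
          = deriv u (Real.exp t) := by
        rw [mul_assoc, hexp, mul_one]
      rw [h4]
      linear_combination -hode'
    rw [hval]
    exact h3
  -- estimate setup
  have habs : 0 < |b * l - c| := abs_pos.2 hd0ne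
  set δ : ℝ := min 1 (|b * l - c| / (4 * (|a| + 1 + 3 * c + 1))) with hδdef
  have hden : 0 < 4 * (|a| + 1 + 3 * c + 1) := by positivity
  have hδ : 0 < δ := lt_min one_pos (div_pos habs hden)
  have hδ1 : δ ≤ 1 := min_le_left _ _
  have hδ2 : δ * (4 * (|a| + 1 + 3 * c + 1)) ≤ |b * l - c| := by
    rw [← le_div_iff₀ hden]
    exact min_le_right _ _
  have hε1 : 0 < |b * l - c| / (4 * (|b| + 1)) := by positivity
  obtain ⟨T₁, hT₁⟩ := Metric.tendsto_atTop.1 hwl _ hε1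
  have hEst : ∀ t, max T₁ 0 ≤ t → |f t| ≤ δ →
      |g t - (b * l - c)| ≤ |b * l - c| / 2 := by
    intro t ht hft
    have ht0 : (0:ℝ) ≤ t := le_trans (le_max_right _ _) ht
    have htT : T₁ ≤ t := le_trans (le_max_left _ _) ht
    have hwt := hT₁ t htT
    rw [Real.dist_eq] at hwt
    have hexple : Real.exp (-t) ≤ 1 := by
      have h := Real.exp_le_exp.2 (neg_nonpos.2 ht0)
      rwa [Real.exp_zero] at h
    set s := f t * Real.exp (-t) with hsdef
    have hs : |s| ≤ δ := by
      rw [hsdef, abs_mul, abs_of_pos (Real.exp_pos (-t))]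
      calc |f t| * Real.exp (-t) ≤ δ * 1 :=
            mul_le_mul hft hexple (Real.exp_pos _).le hδ.le
        _ = δ := mul_one δ
    have hid : g t - (b * l - c)
        = (a + 1) * f t + b * (w t - l) + (-(c * (s * (s - 2)))) := by
      simp only [hgdef, hsdef]
      ring
    rw [hid]
    have b1 : |(a + 1) * f t| ≤ (|a| + 1) * δ := by
      rw [abs_mul]
      exact mul_le_mul (by simpa using abs_add_le a 1) hft (abs_nonneg _) (by positivity)
    have b2 : |b * (w t - l)| ≤ |b| * (|b * l - c| / (4 * (|b| + 1))) := by
      rw [abs_mul]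
      exact mul_le_mul_of_nonneg_left hwt.le (abs_nonneg b)
    have b2' : |b| * (|b * l - c| / (4 * (|b| + 1))) ≤ |b * l - c| / 4 := by
      have h1 : |b| * (|b * l - c| / (4 * (|b| + 1)))
          ≤ (|b| + 1) * (|b * l - c| / (4 * (|b| + 1))) := by
        apply mul_le_mul_of_nonneg_right (by linarith) (by positivity)
      have h2 : (|b| + 1) * (|b * l - c| / (4 * (|b| + 1))) = |b * l - c| / 4 := by
        have : |b| + 1 ≠ 0 := by positivity
        field_simp
      linarith
    have hs2 : |s - 2| ≤ 3 := by
      obtain ⟨l1, l2⟩ := abs_le.1 hs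
      rw [abs_le]
      constructor <;> linarith
    have b3 : |(-(c * (s * (s - 2))))| ≤ c * (δ * 3) := by
      rw [abs_neg, abs_mul, abs_of_pos hc, abs_mul]
      apply mul_le_mul_of_nonneg_left ?_ hc.le
      exact mul_le_mul hs hs2 (abs_nonneg _) hδ.le
    have hsum := abs_add_three ((a + 1) * f t) (b * (w t - l)) (-(c * (s * (s - 2))))
    have hkey : (|a| + 1) * δ + c * (δ * 3) ≤ |b * l - c| / 4 := by nlinarith [hδ2]
    linarith
  -- MVT point with small derivative
  have hwc : Continuous w := continuous_iff_continuousAt.2 fun t => (hWd t).continuousAt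
  obtain ⟨T₂, hT₂⟩ := Metric.tendsto_atTop.1 hwl (δ / 2) (by positivity)
  set T₃ : ℝ := max (max T₁ 0) T₂ with hT₃def
  obtain ⟨t₀, ht₀mem, ht₀eq⟩ := exists_hasDerivAt_eq_slope w f
    (by linarith : T₃ < T₃ + 1) hwc.continuousOn (fun x _ => hWd x)
  have ht₀small : |f t₀| < δ := by
    rw [ht₀eq]
    have d1 := hT₂ (T₃ + 1) (by linarith [le_max_right (max T₁ 0) T₂])
    have d2 := hT₂ T₃ (le_max_right _ _)
    rw [Real.dist_eq] at d1 d2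
    have hden1 : T₃ + 1 - T₃ = 1 := by ring
    rw [hden1, div_one]
    have hsplit : w (T₃ + 1) - w T₃ = (w (T₃ + 1) - l) - (w T₃ - l) := by ring
    rw [hsplit]
    calc |(w (T₃ + 1) - l) - (w T₃ - l)| ≤ |w (T₃ + 1) - l| + |w T₃ - l| := abs_sub _ _
      _ < δ := by linarith
  have ht₀0 : max T₁ 0 ≤ t₀ := le_trans (le_max_left _ _) ht₀mem.1.le
  have hMw : ∀ t, w t ≤ M :=
    fun t => le_of_abs_le (hM _ (Set.mem_Ici.2 (Real.exp_pos t).le))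
  have hMw' : ∀ t, -w t ≤ M := by
    intro t
    have h := abs_le.1 (hM (Real.exp t) (Set.mem_Ici.2 (Real.exp_pos t).le))
    linarith [h.1]
  rcases lt_or_gt_of_ne hd0ne with hneg | hpos
  · -- b*l - c < 0 : apply to -w
    refine key_lemma (fun t => -f t) (fun t => -g t) (fun t => -w t)
      (-(b * l - c) / 2) δ t₀ M (by linarith) hδ
      (fun t => (hfd t).neg) (fun t => (hWd t).neg) ?_ (by simpa using ht₀small) hMw'
    intro t ht hft
    rw [abs_neg] at hft
    have h := hEst t (le_trans ht₀0 ht) hft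
    rw [abs_of_neg hneg] at h
    have := abs_le.1 h
    linarith [this.2]
  · -- b*l - c > 0
    refine key_lemma f g w ((b * l - c) / 2) δ t₀ M (by linarith) hδ
      hfd hWd ?_ ht₀small hMw
    intro t ht hft
    have h := hEst t (le_trans ht₀0 ht) hft
    rw [abs_of_pos hpos] at h
    have := abs_le.1 h
    linarith [this.1]
end

section
/- Let u : [0,∞) → ℝ be continuous, C² on (0,∞), nonconstant, eventually monotone, satisfying x²u'' = axu' + bu − c(u'−1)² on (0,∞) with c > 0 and b = 0. Then u is unbounded. -/
open Set Filter Real Topology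

/-- Barrier lemma: if `f' < 0` whenever `B < f ≤ C`, and `f s ≤ B`, then `f` stays `≤ B`. -/
lemma aux_no_upcross (f f' : ℝ → ℝ) (s B C : ℝ) (hBC : B < C)
    (hd : ∀ y, s ≤ y → HasDerivAt f (f' y) y)
    (hreg : ∀ y, s ≤ y → B < f y → f y ≤ C → f' y < 0)
    (hs : f s ≤ B) : ∀ t, s ≤ t → f t ≤ B := by
  intro t ht
  by_contra hft
  push_neg at hft
  have hst : s < t := by
    rcases eq_or_lt_of_le ht with rfl | h
    · exact absurd hs (not_le.mpr hft)
    · exact h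
  have hcont : ContinuousOn f (Icc s t) := fun y hy =>
    ((hd y hy.1).continuousAt).continuousWithinAt
  set S : Set ℝ := {y ∈ Icc s t | f y ≤ B} with hSdef
  have hSclosed : IsClosed S := by
    have hEq : S = Icc s t ∩ f ⁻¹' (Iic B) := by
      ext y
      simp only [hSdef, Set.mem_setOf_eq, Set.mem_inter_iff, Set.mem_preimage, Set.mem_Iic]
    rw [hEq]
    exact hcont.preimage_isClosed_of_isClosed isClosed_Icc isClosed_Iic
  have hSne : S.Nonempty := ⟨s, ⟨le_refl s, hst.le⟩, hs⟩
  have hSbdd : BddAbove S := ⟨t, fun y hy => hy.1.2⟩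
  set σ := sSup S with hσdef
  obtain ⟨hσIcc, hσB⟩ := hSclosed.csSup_mem hSne hSbdd
  have hσs : s ≤ σ := hσIcc.1
  have hσt : σ ≤ t := hσIcc.2
  have hσlt : σ < t := lt_of_le_of_ne hσt (fun h => absurd (h ▸ hσB) (not_le.mpr hft))
  have hafter : ∀ y, σ < y → y ≤ t → B < f y := by
    intro y h1 h2
    by_contra h
    push_neg at h
    exact absurd (le_csSup hSbdd ⟨⟨le_trans hσs h1.le, h2⟩, h⟩) (not_le.mpr h1)
  have hcσ : ContinuousAt f σ := (hd σ hσs).continuousAt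
  have hev : ∀ᶠ y in 𝓝 σ, f y < C :=
    hcσ.eventually_lt_const (lt_of_le_of_lt hσB hBC)
  obtain ⟨ε, hε, hball⟩ := Metric.eventually_nhds_iff.mp hev
  set t' := min (σ + ε/2) t with ht'def
  have hσt' : σ < t' := lt_min (by linarith) hσlt
  have ht't : t' ≤ t := min_le_right _ _
  have hnear : ∀ y, σ ≤ y → y ≤ t' → f y < C := by
    intro y h1 h2
    apply hball
    have h3 : y ≤ σ + ε/2 := le_trans h2 (min_le_left _ _)
    rw [Real.dist_eq, abs_lt]
    constructor <;> linarith
  obtain ⟨z, hz, hzeq⟩ := exists_hasDerivAt_eq_slope f f' hσt'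
    (fun y hy => ((hd y (le_trans hσs hy.1)).continuousAt).continuousWithinAt)
    (fun y hy => hd y (le_trans hσs hy.1.le))
  have hfz : B < f z := hafter z hz.1 (le_trans hz.2.le ht't)
  have hfzC : f z ≤ C := (hnear z hz.1.le hz.2.le).le
  have hneg : f' z < 0 := hreg z (le_trans hσs hz.1.le) hfz hfzC
  have hpos : 0 < f' z := by
    rw [hzeq]
    apply div_pos
    · have := hafter t' hσt' ht't; linarith
    · linarith
  linarith

/-- Log-decay lemma. -/
lemma aux_log_decay (f f' : ℝ → ℝ) (s t δ : ℝ) (hs : 0 < s) (hst : s ≤ t)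
    (hd : ∀ y ∈ Icc s t, HasDerivAt f (f' y) y)
    (hb : ∀ y ∈ Icc s t, f' y ≤ -δ / y) :
    f t ≤ f s - δ * (Real.log t - Real.log s) := by
  rcases eq_or_lt_of_le hst with rfl | hlt
  · simp
  set g : ℝ → ℝ := fun y => f y + δ * Real.log y with hgdef
  have hg : ∀ y ∈ Icc s t, HasDerivAt g (f' y + δ * y⁻¹) y := by
    intro y hy
    exact (hd y hy).add ((Real.hasDerivAt_log (ne_of_gt (lt_of_lt_of_le hs hy.1))).const_mul δ)
  obtain ⟨z, hz, heq⟩ := exists_hasDerivAt_eq_slope g (fun y => f' y + δ * y⁻¹) hlt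
    (fun y hy => ((hg y hy).continuousAt).continuousWithinAt)
    (fun y hy => hg y (Ioo_subset_Icc_self hy))
  have hz0 : 0 < z := lt_of_lt_of_le hs hz.1.le
  have hle : f' z + δ * z⁻¹ ≤ 0 := by
    have h1 := hb z (Ioo_subset_Icc_self hz)
    have h2 : -δ / z + δ * z⁻¹ = 0 := by field_simp; ring
    linarith
  have h3 : g t - g s = (f' z + δ * z⁻¹) * (t - s) :=
    (div_eq_iff (by linarith : t - s ≠ 0)).mp heq.symm
  have h4 : g t - g s ≤ 0 := by
    rw [h3]; exact mul_nonpos_of_nonpos_of_nonneg hle (by linarith)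
  simp only [hgdef] at h4
  linarith

/-- Monotone on a right half-line implies nonnegative derivative at interior points. -/
lemma aux_deriv_nonneg {u : ℝ → ℝ} {x₁ y d : ℝ} (hm : MonotoneOn u (Ici x₁))
    (hy : x₁ < y) (hd : HasDerivAt u d y) : 0 ≤ d := by
  have ht : Tendsto (slope u y) (𝓝[>] y) (𝓝 d) :=
    (hasDerivAt_iff_tendsto_slope.mp hd).mono_left
      (nhdsWithin_mono _ (fun z hz => ne_of_gt hz))
  refine ge_of_tendsto ht ?_
  filter_upwards [self_mem_nhdsWithin] with z hz
  have h1 : u y ≤ u z := hm hy.le (lt_trans hy hz).le hz.le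
  have h2 : (0:ℝ) < z - y := by simp only [Set.mem_Ioi] at hz; linarith
  rw [slope_def_field]
  exact div_nonneg (by linarith) h2.le

/-- Antitone version. -/
lemma aux_deriv_nonpos {u : ℝ → ℝ} {x₁ y d : ℝ} (hm : AntitoneOn u (Ici x₁))
    (hy : x₁ < y) (hd : HasDerivAt u d y) : d ≤ 0 := by
  have := aux_deriv_nonneg (u := fun z => -u z) (x₁ := x₁) (y := y) (d := -d)
    (fun p hp q hq hpq => neg_le_neg (hm hp hq hpq)) hy hd.neg
  linarith
/-- Lemma 3.2(i), case `b = 0`: a nonconstant, eventually monotone solution is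
unbounded. -/
theorem stmt_17 (a c : ℝ) (hc : 0 < c) (u : ℝ → ℝ)
    (hcont : ContinuousOn u (Set.Ici 0))
    (hC2 : ContDiffOn ℝ 2 u (Set.Ioi 0))
    (hode : ∀ x ∈ Set.Ioi (0:ℝ),
      x ^ 2 * deriv (deriv u) x
        = a * x * deriv u x + (0:ℝ) * u x - c * (deriv u x - 1) ^ 2)
    (hnonconst : ¬ ∀ x ∈ Set.Ici (0:ℝ), u x = u 0)
    (hmono : ∃ x₁ : ℝ, 0 ≤ x₁ ∧
      (MonotoneOn u (Set.Ici x₁) ∨ AntitoneOn u (Set.Ici x₁))) :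
    ¬ ∃ M : ℝ, ∀ x ∈ Set.Ici (0:ℝ), |u x| ≤ M := by
  rintro ⟨M, hM⟩
  obtain ⟨x₁, hx₁0, hmc⟩ := hmono
  set v : ℝ → ℝ := deriv u with hvdef
  -- basic differentiability facts
  have hdu : ∀ y : ℝ, 0 < y → HasDerivAt u (v y) y := by
    intro y hy
    have h1 : DifferentiableOn ℝ u (Set.Ioi 0) := hC2.differentiableOn (by norm_num)
    exact (h1.differentiableAt (isOpen_Ioi.mem_nhds hy)).hasDerivAt
  have hC1v : ContDiffOn ℝ 1 v (Set.Ioi 0) :=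
    hC2.deriv_of_isOpen isOpen_Ioi (by norm_num)
  have hdv : ∀ y : ℝ, 0 < y → HasDerivAt v (deriv v y) y := by
    intro y hy
    exact ((hC1v.differentiableOn (by norm_num)).differentiableAt
      (isOpen_Ioi.mem_nhds hy)).hasDerivAt
  -- the function ψ and its derivative Φ
  set ψ : ℝ → ℝ := fun y => y * v y with hψdef
  set Φ : ℝ → ℝ := fun y => (a + 1) * v y - c * (v y - 1) ^ 2 / y with hΦdef
  have hdψ : ∀ y : ℝ, 0 < y → HasDerivAt ψ (Φ y) y := by
    intro y hy
    have hy0 : y ≠ 0 := ne_of_gt hy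
    have h1 : HasDerivAt (fun z => z * v z) (1 * v y + y * deriv v y) y :=
      (hasDerivAt_id y).mul (hdv y hy)
    have h3 := hode y hy
    have h2 : 1 * v y + y * deriv v y = Φ y := by
      simp only [hΦdef]
      field_simp
      linear_combination h3
    simp only [hψdef]
    rw [← h2]
    exact h1
  -- constants
  set K : ℝ := c / (16 * (|a + 1| + 1)) with hKdef
  have habs : (0:ℝ) ≤ |a + 1| := abs_nonneg _
  have hK0 : 0 < K := by
    apply div_pos hc; nlinarith
  have hKabs : |a + 1| * (2 * K) ≤ c / 8 := by
    have hDne : (16 * (|a + 1| + 1)) ≠ 0 := by positivity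
    rw [hKdef]
    rw [show |a + 1| * (2 * (c / (16 * (|a + 1| + 1)))) = (|a + 1| * 2 * c) / (16 * (|a + 1| + 1))
      from by ring]
    rw [div_le_div_iff₀ (by positivity) (by norm_num : (0:ℝ) < 8)]
    nlinarith
  set x₀ : ℝ := max (max (x₁ + 1) 1) (4 * K) with hx₀def
  have hx₀x₁ : x₁ < x₀ :=
    lt_of_lt_of_le (by linarith) (le_trans (le_max_left _ _) (le_max_left _ _))
  have hx₀pos : (0:ℝ) < x₀ :=
    lt_of_lt_of_le one_pos (le_trans (le_max_right _ _) (le_max_left _ _))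
  have hx₀4K : 4 * K ≤ x₀ := le_max_right _ _
  -- region derivative bounds
  have hregA : ∀ y, x₀ ≤ y → 0 ≤ ψ y → ψ y ≤ 2 * K → Φ y ≤ -(c/8) / y := by
    intro y hy hψ0 hψ2
    have hy0 : 0 < y := lt_of_lt_of_le hx₀pos hy
    simp only [hψdef] at hψ0 hψ2
    have hy4K : 4 * K ≤ y := le_trans hx₀4K hy
    have hv0 : 0 ≤ v y := by nlinarith
    have hv2 : v y ≤ 1/2 := by nlinarith
    have hsq : 1/4 ≤ (v y - 1)^2 := by
      nlinarith [mul_nonneg (by linarith : (0:ℝ) ≤ 1/2 - v y) (by linarith : (0:ℝ) ≤ 3/2 - v y)]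
    have h1 : (a + 1) * (y * v y) ≤ |a + 1| * (2 * K) := by
      calc (a + 1) * (y * v y) ≤ |a + 1| * (y * v y) :=
            mul_le_mul_of_nonneg_right (le_abs_self _) hψ0
        _ ≤ |a + 1| * (2 * K) := mul_le_mul_of_nonneg_left hψ2 habs
    have h2 : c * (1/4) ≤ c * (v y - 1)^2 := mul_le_mul_of_nonneg_left hsq hc.le
    have key : (a + 1) * (y * v y) - c * (v y - 1)^2 ≤ -(c/8) := by linarith
    have hrw : Φ y = ((a + 1) * (y * v y) - c * (v y - 1)^2) / y := by
      simp only [hΦdef]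
      field_simp
    rw [hrw]
    exact (div_le_div_iff_of_pos_right hy0).mpr key
  have hregB : ∀ y, x₀ ≤ y → -(2*K) ≤ ψ y → ψ y ≤ 0 → Φ y ≤ -(c/2) / y := by
    intro y hy hψ1 hψ2
    have hy0 : 0 < y := lt_of_lt_of_le hx₀pos hy
    simp only [hψdef] at hψ1 hψ2
    have hv0 : v y ≤ 0 := by nlinarith
    have hsq : 1 ≤ (v y - 1)^2 := by nlinarith [sq_nonneg (v y)]
    have h1 : (a + 1) * (y * v y) ≤ |a + 1| * (2 * K) := by
      calc (a + 1) * (y * v y) ≤ |(a + 1) * (y * v y)| := le_abs_self _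
        _ = |a + 1| * |y * v y| := abs_mul _ _
        _ ≤ |a + 1| * (2 * K) :=
            mul_le_mul_of_nonneg_left (abs_le.mpr ⟨by linarith, by linarith⟩) habs
    have h2 : c * 1 ≤ c * (v y - 1)^2 := mul_le_mul_of_nonneg_left hsq hc.le
    have key : (a + 1) * (y * v y) - c * (v y - 1)^2 ≤ -(c/2) := by linarith
    have hrw : Φ y = ((a + 1) * (y * v y) - c * (v y - 1)^2) / y := by
      simp only [hΦdef]
      field_simp
    rw [hrw]
    exact (div_le_div_iff_of_pos_right hy0).mpr key
  rcases hmc with hm | hm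
  · -- monotone case
    have hvpos : ∀ y, x₀ ≤ y → 0 ≤ v y := fun y hy =>
      aux_deriv_nonneg hm (lt_of_lt_of_le hx₀x₁ hy) (hdu y (lt_of_lt_of_le hx₀pos hy))
    have hψpos : ∀ y, x₀ ≤ y → 0 ≤ ψ y := by
      intro y hy
      simp only [hψdef]
      exact mul_nonneg (le_trans hx₀pos.le hy) (hvpos y hy)
    -- find a starting point where ψ is small
    have hdy : ∃ n : ℝ, x₀ ≤ n ∧ u (2*n) - u n ≤ K/2 := by
      by_contra h
      push_neg at h
      have grow : ∀ i : ℕ, u x₀ + i * (K/2) ≤ u (x₀ * 2^i) := by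
        intro i
        induction i with
        | zero => simp
        | succ i ih =>
          have hpow : (1:ℝ) ≤ 2^i := one_le_pow₀ (by norm_num)
          have hni : x₀ ≤ x₀ * 2^i := le_mul_of_one_le_right hx₀pos.le hpow
          have hstep := h (x₀ * 2^i) hni
          have heq : 2 * (x₀ * 2^i) = x₀ * 2^(i+1) := by ring
          rw [← heq] at *
          push_cast
          rw [← heq]
          linarith
      obtain ⟨i, hi⟩ := exists_nat_gt ((M - u x₀) / (K / 2))
      have h2 : M - u x₀ < i * (K/2) := by
        rw [div_lt_iff₀ (by linarith : (0:ℝ) < K/2)] at hi; linarith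
      have hpow : (1:ℝ) ≤ 2^i := one_le_pow₀ (by norm_num)
      have h4 := hM (x₀ * 2^i) (Set.mem_Ici.mpr (by positivity))
      have h5 : u (x₀ * 2^i) ≤ M := (abs_le.mp h4).2
      linarith [grow i]
    obtain ⟨n, hn, hslope⟩ := hdy
    have hn0 : 0 < n := lt_of_lt_of_le hx₀pos hn
    obtain ⟨ξ, hξ, hξeq⟩ := exists_hasDerivAt_eq_slope u v (by linarith : n < 2*n)
      (hcont.mono (fun y hy => le_trans hn0.le hy.1))
      (fun y hy => hdu y (lt_trans hn0 hy.1))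
    have hξx₀ : x₀ ≤ ξ := le_trans hn hξ.1.le
    have hξpos : 0 < ξ := lt_of_lt_of_le hx₀pos hξx₀
    have hΔ0 : 0 ≤ u (2*n) - u n := by
      apply sub_nonneg.mpr
      exact hm (Set.mem_Ici.mpr (le_of_lt (lt_of_lt_of_le hx₀x₁ hn)))
        (Set.mem_Ici.mpr (by linarith [lt_of_lt_of_le hx₀x₁ hn])) (by linarith)
    have hψξ : ψ ξ ≤ K := by
      simp only [hψdef]
      rw [hξeq, show 2*n - n = n by ring]
      have h1 : ξ * ((u (2*n) - u n)/n) ≤ (2*n) * ((u (2*n) - u n)/n) :=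
        mul_le_mul_of_nonneg_right hξ.2.le (div_nonneg hΔ0 hn0.le)
      have h2 : (2*n) * ((u (2*n) - u n)/n) = 2*(u (2*n) - u n) := by
        field_simp
      linarith
    -- barrier: ψ stays below K
    have hbar := aux_no_upcross ψ Φ ξ K (2*K) (by linarith)
      (fun y hy => hdψ y (lt_of_lt_of_le hξpos hy))
      (fun y hy h1 h2 => lt_of_le_of_lt
        (hregA y (le_trans hξx₀ hy) (by linarith) h2)
        (div_neg_of_neg_of_pos (by linarith) (lt_of_lt_of_le hξpos hy)))
      hψξ
    -- logarithmic decay drives ψ negative: contradiction with ψ ≥ 0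
    set T := ξ * Real.exp (8*(K+1)/c) with hTdef
    have hexp1 : (1:ℝ) ≤ Real.exp (8*(K+1)/c) := Real.one_le_exp (by positivity)
    have hξT : ξ ≤ T := le_mul_of_one_le_right hξpos.le hexp1
    have hlogT : Real.log T = Real.log ξ + 8*(K+1)/c := by
      rw [hTdef, Real.log_mul (ne_of_gt hξpos) (Real.exp_ne_zero _), Real.log_exp]
    have hdecay := aux_log_decay ψ Φ ξ T (c/8) hξpos hξT
      (fun y hy => hdψ y (lt_of_lt_of_le hξpos hy.1))
      (fun y hy => hregA y (le_trans hξx₀ hy.1)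
        (hψpos y (le_trans hξx₀ hy.1)) (by linarith [hbar y hy.1]))
    have hψT0 : 0 ≤ ψ T := hψpos T (le_trans hξx₀ hξT)
    have hfinal : (c/8) * (Real.log T - Real.log ξ) = K + 1 := by
      rw [hlogT]
      field_simp
      ring
    linarith
  · -- antitone case
    have hvneg : ∀ y, x₀ ≤ y → v y ≤ 0 := fun y hy =>
      aux_deriv_nonpos hm (lt_of_lt_of_le hx₀x₁ hy) (hdu y (lt_of_lt_of_le hx₀pos hy))
    have hψneg : ∀ y, x₀ ≤ y → ψ y ≤ 0 := by
      intro y hy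
      simp only [hψdef]
      exact mul_nonpos_iff.mpr (Or.inl ⟨le_trans hx₀pos.le hy, hvneg y hy⟩)
    -- step 1 : find a point where ψ ≤ -2K
    have hstep1 : ∃ w, x₀ ≤ w ∧ ψ w ≤ -(2*K) := by
      by_contra h
      push_neg at h
      set T₁ := x₀ * Real.exp (2*(2*K+1)/c) with hT₁def
      have hexp1 : (1:ℝ) ≤ Real.exp (2*(2*K+1)/c) := Real.one_le_exp (by positivity)
      have hx₀T₁ : x₀ ≤ T₁ := le_mul_of_one_le_right hx₀pos.le hexp1
      have hlogT₁ : Real.log T₁ = Real.log x₀ + 2*(2*K+1)/c := by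
        rw [hT₁def, Real.log_mul (ne_of_gt hx₀pos) (Real.exp_ne_zero _), Real.log_exp]
      have hdecay := aux_log_decay ψ Φ x₀ T₁ (c/2) hx₀pos hx₀T₁
        (fun y hy => hdψ y (lt_of_lt_of_le hx₀pos hy.1))
        (fun y hy => hregB y hy.1 (h y hy.1).le (hψneg y hy.1))
      have hfinal : (c/2) * (Real.log T₁ - Real.log x₀) = 2*K+1 := by
        rw [hlogT₁]
        field_simp
        ring
      have := h T₁ hx₀T₁
      have := hψneg x₀ (le_refl x₀)
      linarith
    obtain ⟨w, hw, hψw⟩ := hstep1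
    have hwpos : 0 < w := lt_of_lt_of_le hx₀pos hw
    -- step 2 : ψ stays below -2K
    have hbar := aux_no_upcross ψ Φ w (-(2*K)) 0 (by linarith)
      (fun y hy => hdψ y (lt_of_lt_of_le hwpos hy))
      (fun y hy h1 h2 => lt_of_le_of_lt
        (hregB y (le_trans hw hy) h1.le h2)
        (div_neg_of_neg_of_pos (by linarith) (lt_of_lt_of_le hwpos hy)))
      hψw
    -- step 3 : v y ≤ -(2K)/y for y ≥ w, hence u → -∞
    have hvbound : ∀ y, w ≤ y → v y ≤ -(2*K) / y := by
      intro y hy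
      have hy0 : 0 < y := lt_of_lt_of_le hwpos hy
      have h1 := hbar y hy
      simp only [hψdef] at h1
      rw [le_div_iff₀ hy0]
      linarith
    have huw : -M ≤ u w := (abs_le.mp (hM w (Set.mem_Ici.mpr hwpos.le))).1
    set T₂ := w * Real.exp ((u w + M + 1)/(2*K)) with hT₂def
    have hexp1 : (1:ℝ) ≤ Real.exp ((u w + M + 1)/(2*K)) :=
      Real.one_le_exp (div_nonneg (by linarith) (by linarith))
    have hwT₂ : w ≤ T₂ := le_mul_of_one_le_right hwpos.le hexp1
    have hlogT₂ : Real.log T₂ = Real.log w + (u w + M + 1)/(2*K) := by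
      rw [hT₂def, Real.log_mul (ne_of_gt hwpos) (Real.exp_ne_zero _), Real.log_exp]
    have hdecay := aux_log_decay u v w T₂ (2*K) hwpos hwT₂
      (fun y hy => hdu y (lt_of_lt_of_le hwpos hy.1))
      (fun y hy => hvbound y hy.1)
    have hfinal : (2*K) * (Real.log T₂ - Real.log w) = u w + M + 1 := by
      rw [hlogT₂]
      field_simp
      ring
    have hT₂M : -M ≤ u T₂ :=
      (abs_le.mp (hM T₂ (Set.mem_Ici.mpr (le_trans hwpos.le hwT₂)))).1
    linarith
end

section
/- Let u, v : [0,∞) → ℝ be two distinct solutions of x²w'' = axw' + bw − c(w'−1)² on (0,∞) with c > 0, u(0) = v(0), u'(0⁺) = v'(0⁺) = 1, u'' ≤ 0 on (0,∞), and suppose both u' and v' tend to 0 at infinity. Then a contradiction follows; i.e., there is at most one solution u with 0 ≤ u(x) ≤ x on [0,∞) (satisfying these boundary behaviors). -/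
open Set Filter Real


lemma no_max_of_pos_second_deriv {φ : ℝ → ℝ} {τ : ℝ}
    (hd : ∀ᶠ x in nhds τ, DifferentiableAt ℝ φ x)
    (h1 : deriv φ τ = 0) (h2 : 0 < deriv (deriv φ) τ) :
    ¬ IsLocalMax φ τ := by
  intro hm
  have hdd : DifferentiableAt ℝ (deriv φ) τ := differentiableAt_of_deriv_ne_zero h2.ne'
  have hs : Tendsto (slope (deriv φ) τ) (nhdsWithin τ {τ}ᶜ) (nhds (deriv (deriv φ) τ)) :=
    hasDerivAt_iff_tendsto_slope.1 hdd.hasDerivAt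
  have hs' : Tendsto (slope (deriv φ) τ) (nhdsWithin τ (Ioi τ)) (nhds (deriv (deriv φ) τ)) :=
    hs.mono_left (nhdsWithin_mono _ (fun x hx => ne_of_gt hx))
  have h3 : ∀ᶠ x in nhdsWithin τ (Ioi τ), 0 < deriv φ x := by
    filter_upwards [hs'.eventually_const_lt h2, self_mem_nhdsWithin] with x hx hx'
    rw [slope_def_field] at hx
    have hxτ : 0 < x - τ := sub_pos.2 hx'
    have := mul_pos hx hxτ
    rw [div_mul_cancel₀] at this
    · linarith [h1 ▸ this]
    · exact hxτ.ne'
  obtain ⟨σ, hσ, hσ2⟩ := mem_nhdsGT_iff_exists_Ioc_subset.1 h3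
  obtain ⟨ε, hε, hεd⟩ := Metric.eventually_nhds_iff.1 hd
  set σ' := min σ (τ + ε/2) with hσ'def
  have hτσ' : τ < σ' := lt_min hσ (by linarith)
  have hIccd : ∀ x ∈ Icc τ σ', DifferentiableAt ℝ φ x := by
    intro x hx
    apply hεd
    rw [Real.dist_eq, abs_sub_lt_iff]
    constructor
    · have := hx.2; have : x ≤ τ + ε/2 := le_trans this (min_le_right _ _); linarith
    · have := hx.1; linarith
  have hsm : StrictMonoOn φ (Icc τ σ') := by
    apply strictMonoOn_of_deriv_pos (convex_Icc _ _)
    · exact fun x hx => (hIccd x hx).continuousAt.continuousWithinAt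
    · intro x hx
      rw [interior_Icc] at hx
      exact hσ2 ⟨hx.1, le_trans hx.2.le (min_le_left _ _)⟩
  have hev : ∀ᶠ x in nhdsWithin τ (Ioi τ), φ x ≤ φ τ ∧ x ∈ Ioc τ σ' := by
    refine Filter.Eventually.and ?_ ?_
    · exact (hm.filter_mono nhdsWithin_le_nhds)
    · exact Ioc_mem_nhdsGT_of_mem ⟨le_refl _, hτσ'⟩
  obtain ⟨x, hx1, hx2⟩ := hev.exists
  exact absurd (hsm ⟨le_refl _, hτσ'.le⟩ ⟨hx2.1.le, hx2.2⟩ hx2.1) (not_lt.2 hx1)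

lemma keyineq (G H E gt ht : ℝ) (hG0 : 0 ≤ G) (hH0 : 0 ≤ H) (hE1 : 1 ≤ E)
    (hg1 : -G ≤ gt) (hh1 : -H ≤ ht) :
    1 ≤ (1+G+H)^2*E + (1+G+H)*E*gt + ht*(E-1) := by
  nlinarith [mul_nonneg (mul_nonneg (by positivity : (0:ℝ) ≤ 1+G+H) (by linarith : (0:ℝ) ≤ E)) (by linarith : 0 ≤ gt + G),
    mul_nonneg (by linarith : 0 ≤ ht + H) (by linarith : 0 ≤ E - 1),
    mul_nonneg hH0 (by linarith : 0 ≤ E - 1),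
    mul_nonneg hG0 (by linarith : 0 ≤ E - 1),
    mul_nonneg (mul_nonneg hG0 hH0) (by linarith : 0 ≤ E - 1),
    mul_nonneg (mul_nonneg hG0 hG0) (by linarith : 0 ≤ E - 1),
    mul_nonneg (mul_nonneg hH0 hH0) (by linarith : 0 ≤ E - 1),
    mul_nonneg hG0 hH0]

lemma maxp (y g h : ℝ → ℝ)
    (hydiff : ∀ x ∈ Ioi (0:ℝ), DifferentiableAt ℝ y x)
    (hy'diff : ∀ x ∈ Ioi (0:ℝ), DifferentiableAt ℝ (deriv y) x)
    (heq : ∀ x ∈ Ioi (0:ℝ), deriv (deriv y) x + g x * deriv y x + h x * y x = 0)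
    (hgc : ContinuousOn g (Ioi 0)) (hhc : ContinuousOn h (Ioi 0))
    (hh : ∀ x ∈ Ioi (0:ℝ), h x ≤ 0)
    (hy0 : Tendsto y (nhdsWithin 0 (Ioi 0)) (nhds 0))
    (hyt : Tendsto y atTop (nhds 0)) :
    ∀ x ∈ Ioi (0:ℝ), y x ≤ 0 := by
  by_contra hcon
  push_neg at hcon
  obtain ⟨x₁, hx₁, hyx₁⟩ := hcon
  -- pick δ on the left
  have h1 : ∀ᶠ x in nhdsWithin 0 (Ioi 0), y x < y x₁ ∧ x ∈ Ioo (0:ℝ) x₁ :=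
    (hy0.eventually_lt_const hyx₁).and (Ioo_mem_nhdsGT_of_mem ⟨le_refl _, hx₁⟩)
  obtain ⟨δ, hδmem, hδ⟩ := mem_nhdsGT_iff_exists_Ioc_subset.1 h1
  have hδpos : (0:ℝ) < δ := hδmem
  have hδsmall : ∀ x ∈ Ioc (0:ℝ) δ, y x < y x₁ ∧ x < x₁ := by
    intro x hx
    obtain ⟨hy, hmem⟩ := hδ hx
    exact ⟨hy, hmem.2⟩
  have hδx₁ : δ < x₁ := (hδsmall δ ⟨hδpos, le_refl _⟩).2
  -- pick R on the right
  obtain ⟨R₀, hR₀⟩ := (hyt.eventually_lt_const hyx₁).exists_forall_of_atTop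
  set R := max R₀ (x₁ + 1) with hRdef
  have hx₁R : x₁ < R := lt_of_lt_of_le (by linarith) (le_max_right _ _)
  have hyR : y R < y x₁ := hR₀ R (le_max_left _ _)
  -- max over [δ, R]
  have hIccIoi : Icc δ R ⊆ Ioi 0 := fun x hx => lt_of_lt_of_le hδpos hx.1
  have hycont : ContinuousOn y (Icc δ R) := fun x hx =>
    (hydiff x (hIccIoi hx)).continuousAt.continuousWithinAt
  obtain ⟨ρ, hρmem, hρmax⟩ := (isCompact_Icc).exists_isMaxOn (nonempty_Icc.2 (by linarith)) hycont
  set M := y ρ with hMdef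
  have hx₁mem : x₁ ∈ Icc δ R := ⟨hδx₁.le, hx₁R.le⟩
  have hMx₁ : y x₁ ≤ M := hρmax hx₁mem
  have hMpos : 0 < M := lt_of_lt_of_le hyx₁ hMx₁
  have hyδ : y δ < M := lt_of_lt_of_le (hδsmall δ ⟨hδpos, le_refl _⟩).1 hMx₁
  have hρδ : δ < ρ := by
    rcases lt_or_eq_of_le hρmem.1 with h | h
    · exact h
    · exfalso; have h2 : M = y δ := by rw [hMdef, ← h]
      linarith
  have hρR : ρ < R := by
    rcases lt_or_eq_of_le hρmem.2 with h | h
    · exact h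
    · exfalso; have h2 : M = y R := by rw [hMdef, h]
      linarith
  -- bounds on g, h over [δ, R]
  obtain ⟨G, hG⟩ := isCompact_Icc.exists_bound_of_continuousOn (hgc.mono hIccIoi)
  obtain ⟨H, hH⟩ := isCompact_Icc.exists_bound_of_continuousOn (hhc.mono hIccIoi)
  have hG0 : 0 ≤ G := le_trans (norm_nonneg _) (hG δ ⟨le_refl _, by linarith⟩)
  have hH0 : 0 ≤ H := le_trans (norm_nonneg _) (hH δ ⟨le_refl _, by linarith⟩)
  set α := 1 + G + H with hαdef
  have hα1 : (1:ℝ) ≤ α := by linarith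
  -- barrier
  set W : ℝ → ℝ := fun x => Real.exp (α * (x - δ)) - 1 with hWdef
  have hWderiv : ∀ x : ℝ, HasDerivAt W (α * Real.exp (α * (x - δ))) x := by
    intro x
    have h1 : HasDerivAt (fun x : ℝ => α * (x - δ)) α x := by
      simpa using ((hasDerivAt_id x).sub_const δ).const_mul α
    have h2 := h1.exp.sub_const 1
    rw [hWdef]
    exact h2.congr_deriv (by ring)
  have hWδ : W δ = 0 := by simp [hWdef]
  have hWpos : ∀ x, δ < x → 0 < W x := by
    intro x hx
    have ht : (0:ℝ) < α * (x - δ) := mul_pos (by linarith) (by linarith)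
    have := Real.add_one_le_exp (α * (x - δ))
    simp only [hWdef]
    linarith
  have hWR : 0 < W R := hWpos R (by linarith)
  set ε := (M - y R) / (2 * W R) with hεdef
  have hεpos : 0 < ε := div_pos (by linarith) (by linarith)
  have hεWR : ε * W R = (M - y R) / 2 := by
    rw [hεdef]; field_simp
  set φ : ℝ → ℝ := fun x => y x - M + ε * W x with hφdef
  have hφδ : φ δ < 0 := by simp only [hφdef, hWδ, mul_zero, add_zero]; linarith
  have hφR : φ R < 0 := by simp only [hφdef, hεWR]; linarith
  have hφρ : 0 < φ ρ := by
    simp only [hφdef, ← hMdef, sub_self, zero_add]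
    exact mul_pos hεpos (hWpos ρ hρδ)
  -- φ has derivative on Ioi 0
  have hφderiv : ∀ x ∈ Ioi (0:ℝ),
      HasDerivAt φ (deriv y x + ε * (α * Real.exp (α * (x - δ)))) x := by
    intro x hx
    exact (((hydiff x hx).hasDerivAt).sub_const M).add ((hWderiv x).const_mul ε)
  have hφcont : ContinuousOn φ (Icc δ R) := fun x hx =>
    ((hφderiv x (hIccIoi hx)).differentiableAt).continuousAt.continuousWithinAt
  obtain ⟨τ, hτmem, hτmax⟩ := (isCompact_Icc).exists_isMaxOn (nonempty_Icc.2 (by linarith)) hφcont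
  have hφτ : 0 < φ τ := lt_of_lt_of_le hφρ (hτmax hρmem)
  have hτδ : δ < τ := by
    rcases lt_or_eq_of_le hτmem.1 with h | h
    · exact h
    · exfalso; have h2 := hφτ; rw [← h] at h2; linarith
  have hτR : τ < R := by
    rcases lt_or_eq_of_le hτmem.2 with h | h
    · exact h
    · exfalso; have h2 := hφR; rw [← h] at h2; linarith
  have hτIoi : τ ∈ Ioi (0:ℝ) := lt_trans hδpos hτδ
  have hlocmax : IsLocalMax φ τ := hτmax.isLocalMax (Icc_mem_nhds hτδ hτR)
  set E := Real.exp (α * (τ - δ)) with hEdef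
  have hE1 : 1 ≤ E := by
    rw [hEdef]
    have : (0:ℝ) ≤ α * (τ - δ) := mul_nonneg (by linarith) (by linarith)
    have h2 := Real.exp_le_exp.2 this
    simpa using h2
  -- deriv φ on Ioi 0
  have hφ'eq : ∀ x ∈ Ioi (0:ℝ),
      deriv φ x = deriv y x + ε * (α * Real.exp (α * (x - δ))) := fun x hx =>
    (hφderiv x hx).deriv
  have hφ'τ : deriv φ τ = 0 := hlocmax.deriv_eq_zero
  have hy'τ : deriv y τ = -(ε * (α * E)) := by
    have := hφ'eq τ hτIoi
    rw [hφ'τ] at this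
    linarith [this]
  -- second derivative of φ at τ
  have hinner : ∀ x : ℝ, HasDerivAt (fun x => ε * (α * Real.exp (α * (x - δ))))
      (ε * (α * (α * Real.exp (α * (x - δ))))) x := by
    intro x
    have h1 : HasDerivAt (fun x : ℝ => α * (x - δ)) α x := by
      simpa using ((hasDerivAt_id x).sub_const δ).const_mul α
    have h2 := (h1.exp.const_mul α).const_mul ε
    exact h2.congr_deriv (by ring)
  have hφ''τ : deriv (deriv φ) τ = deriv (deriv y) τ + ε * (α * (α * E)) := by
    have hev : deriv φ =ᶠ[nhds τ] fun x => deriv y x + ε * (α * Real.exp (α * (x - δ))) :=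
      Filter.eventuallyEq_of_mem (Ioi_mem_nhds hτIoi) hφ'eq
    rw [hev.deriv_eq]
    rw [deriv_fun_add ((hy'diff τ hτIoi)) ((hinner τ).differentiableAt)]
    rw [(hinner τ).deriv]
  have hgτ := abs_le.1 ((Real.norm_eq_abs _ ▸ hG τ ⟨hτδ.le, hτR.le⟩ : |g τ| ≤ G))
  have hhτ := abs_le.1 ((Real.norm_eq_abs _ ▸ hH τ ⟨hτδ.le, hτR.le⟩ : |h τ| ≤ H))
  have hhτ0 : h τ ≤ 0 := hh τ hτIoi
  have hWτ : W τ = E - 1 := rfl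
  have hyτ : y τ = φ τ + M - ε * W τ := by simp only [hφdef]; ring
  have hddy := heq τ hτIoi
  have hpos : 0 < deriv (deriv φ) τ := by
    clear_value R M α W ε φ E
    rw [hφ''τ]
    rw [hy'τ, hyτ, hWτ] at hddy
    have expand : deriv (deriv y) τ + ε * (α * (α * E))
        = ε * (α^2*E + α*E*g τ + h τ*(E-1)) + (-h τ)*φ τ + (-h τ)*M := by
      linear_combination hddy
    rw [expand]
    have hkey : 1 ≤ α^2*E + α*E*g τ + h τ*(E-1) := by
      rw [hαdef]
      exact keyineq G H E (g τ) (h τ) hG0 hH0 hE1 hgτ.1 hhτ.1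
    have h2 : ε ≤ ε * (α^2*E + α*E*g τ + h τ*(E-1)) := le_mul_of_one_le_right hεpos.le hkey
    have h3 : 0 ≤ (-h τ)*φ τ := mul_nonneg (by linarith) hφτ.le
    have h4 : 0 ≤ (-h τ)*M := mul_nonneg (by linarith) hMpos.le
    linarith
  exact no_max_of_pos_second_deriv
    (Filter.eventually_of_mem (Ioi_mem_nhds hτIoi)
      (fun x hx => (hφderiv x hx).differentiableAt))
    hφ'τ hpos hlocmax

set_option maxHeartbeats 1600000 in
lemma lemA (a b c : ℝ) (hc : 0 < c) (u : ℝ → ℝ)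
    (hucont : ContinuousOn u (Ici 0))
    (hu1 : ∀ x ∈ Ioi (0:ℝ), DifferentiableAt ℝ u x)
    (hu2 : ∀ x ∈ Ioi (0:ℝ), DifferentiableAt ℝ (deriv u) x)
    (hodeu : ∀ x ∈ Ioi (0:ℝ),
      x ^ 2 * deriv (deriv u) x
        = a * x * deriv u x + b * u x - c * (deriv u x - 1) ^ 2)
    (hu'0 : Tendsto (deriv u) (nhdsWithin 0 (Ioi 0)) (nhds 1))
    (hab : a + b < 0) : False := by
  have hu0 : Tendsto u (nhdsWithin 0 (Ioi 0)) (nhds (u 0)) :=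
    (hucont 0 self_mem_Ici).mono_left (nhdsWithin_mono 0 Ioi_subset_Ici_self)
  have hxten : Tendsto (fun x : ℝ => x) (nhdsWithin 0 (Ioi 0)) (nhds 0) :=
    tendsto_id.mono_left nhdsWithin_le_nhds
  set B : ℝ → ℝ := fun x => a * x * deriv u x + b * u x - c * (deriv u x - 1) ^ 2 with hBdef
  set s := b * u 0 with hsdef
  have hBten : Tendsto B (nhdsWithin 0 (Ioi 0)) (nhds s) := by
    have h1 : Tendsto (fun x => a * x * deriv u x) (nhdsWithin 0 (Ioi 0)) (nhds 0) := by
      have := ((hxten.const_mul a).mul hu'0)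
      simpa using this
    have h2 : Tendsto (fun x => b * u x) (nhdsWithin 0 (Ioi 0)) (nhds (b * u 0)) := hu0.const_mul b
    have h3 : Tendsto (fun x => c * (deriv u x - 1) ^ 2) (nhdsWithin 0 (Ioi 0)) (nhds 0) := by
      have h4 : Tendsto (fun x => deriv u x - 1) (nhdsWithin 0 (Ioi 0)) (nhds 0) := by
        simpa using hu'0.sub_const 1
      have := (h4.pow 2).const_mul c
      simpa using this
    have := (h1.add h2).sub h3
    simpa [hBdef, hsdef] using this
  -- generic contradiction tool: if deriv (deriv u) x ≤ K * x⁻¹ ^ m eventually with bad antiderivative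
  -- we do each case by hand
  rcases lt_trichotomy s 0 with hs | hs | hs
  · -- s < 0 : u'' ≤ (s/2)/x², u' + (s/2) x⁻¹ antitone, blow-up
    have hev : ∀ᶠ x in nhdsWithin 0 (Ioi 0), B x < s / 2 := hBten.eventually_lt_const (by linarith)
    obtain ⟨δ, hδpos, hδ⟩ := mem_nhdsGT_iff_exists_Ioc_subset.1 hev
    have hδ0 : (0:ℝ) < δ := hδpos
    set F : ℝ → ℝ := fun x => deriv u x + (s/2) * x⁻¹ with hFdef
    have hFderiv : ∀ x ∈ Ioo (0:ℝ) δ, HasDerivAt F (deriv (deriv u) x + (s/2) * (-(x^2)⁻¹)) x := by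
      intro x hx
      exact ((hu2 x hx.1).hasDerivAt).add ((hasDerivAt_inv (ne_of_gt hx.1)).const_mul (s/2))
    have hF' : ∀ x ∈ Ioo (0:ℝ) δ, deriv F x ≤ 0 := by
      intro x hx
      rw [(hFderiv x hx).deriv]
      have hode := hodeu x hx.1
      have hBb : B x < s / 2 := hδ ⟨hx.1, hx.2.le⟩
      have hsq : (0:ℝ) < x ^ 2 := pow_pos hx.1 2
      have h5 : x ^ 2 * deriv (deriv u) x ≤ s / 2 := by
        rw [hode]; exact le_of_lt hBb
      have h6 : deriv (deriv u) x ≤ (s/2) / x ^ 2 := by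
        rw [le_div_iff₀ hsq]; linarith [h5]
      have h7 : (s/2) * (-(x^2)⁻¹) = -((s/2) / x^2) := by field_simp
      rw [h7]; linarith
    have hFanti : AntitoneOn F (Ioo 0 δ) := by
      apply antitoneOn_of_deriv_nonpos (convex_Ioo _ _)
      · exact fun x hx => ((hFderiv x hx).differentiableAt).continuousAt.continuousWithinAt
      · intro x hx; rw [interior_Ioo] at hx; exact ((hFderiv x hx).differentiableAt).differentiableWithinAt
      · intro x hx; rw [interior_Ioo] at hx; exact hF' x hx
    set y := δ/2 with hydef
    have hymem : y ∈ Ioo (0:ℝ) δ := ⟨by linarith, by linarith⟩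
    have hlow : ∀ᶠ x in nhdsWithin 0 (Ioi 0), F y - (s/2) * x⁻¹ ≤ deriv u x := by
      filter_upwards [Ioo_mem_nhdsGT_of_mem ⟨le_refl _, hymem.1⟩] with x hx
      have hxm : x ∈ Ioo (0:ℝ) δ := ⟨hx.1, lt_trans hx.2 hymem.2⟩
      have := hFanti hxm hymem hx.2.le
      simp only [hFdef] at this ⊢
      linarith
    have htop : Tendsto (fun x : ℝ => F y - (s/2) * x⁻¹) (nhdsWithin 0 (Ioi 0)) atTop := by
      have h8 : Tendsto (fun x : ℝ => x⁻¹) (nhdsWithin 0 (Ioi 0)) atTop := tendsto_inv_nhdsGT_zero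
      have h9 : Tendsto (fun x : ℝ => (-(s/2)) * x⁻¹) (nhdsWithin 0 (Ioi 0)) atTop :=
        h8.const_mul_atTop (by linarith)
      have h10 := tendsto_atTop_add_const_left _ (F y) h9
      apply h10.congr
      intro x; ring
    have hbad : ∀ᶠ x in nhdsWithin 0 (Ioi 0), (2:ℝ) ≤ deriv u x := by
      filter_upwards [hlow, htop.eventually_ge_atTop 2] with x h1 h2
      linarith
    have hgood : ∀ᶠ x in nhdsWithin 0 (Ioi 0), deriv u x < 2 := hu'0.eventually_lt_const (by norm_num)
    obtain ⟨x, h1, h2⟩ := (hbad.and hgood).exists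
    linarith
  · -- s = 0, use a + b < 0
    set ε := (-(a+b))/(2*(|a|+|b|+1)) with hεdef
    have hεpos : 0 < ε := by
      apply div_pos (by linarith)
      positivity
    have hev1 : ∀ᶠ x in nhdsWithin 0 (Ioi 0), 1 - ε < deriv u x ∧ deriv u x < 1 + ε :=
      (hu'0.eventually_const_lt (by linarith)).and (hu'0.eventually_lt_const (by linarith))
    obtain ⟨δ, hδpos, hδ⟩ := mem_nhdsGT_iff_exists_Ioc_subset.1 hev1
    have hδ0 : (0:ℝ) < δ := hδpos
    -- bounds on u x - u 0 for x ∈ Ioo 0 δ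
    have hubound : ∀ y ∈ Ioo (0:ℝ) δ, (1-ε)*y ≤ u y - u 0 ∧ u y - u 0 ≤ (1+ε)*y := by
      intro y hy
      constructor
      · -- f₋ = u x - (1-ε) x monotone on Ioo 0 δ
        have hmono : MonotoneOn (fun x => u x - (1-ε)*x) (Ioo 0 δ) := by
          apply monotoneOn_of_deriv_nonneg (convex_Ioo _ _)
          · exact fun x hx => ((hu1 x hx.1).sub ((differentiable_id.const_mul _).differentiableAt)).continuousAt.continuousWithinAt
          · intro x hx; rw [interior_Ioo] at hx
            exact ((hu1 x hx.1).sub (by fun_prop)).differentiableWithinAt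
          · intro x hx; rw [interior_Ioo] at hx
            have hd : HasDerivAt (fun x => u x - (1-ε)*x) (deriv u x - (1-ε)) x := by
              exact (((hu1 x hx.1).hasDerivAt).sub ((hasDerivAt_id x).const_mul (1-ε))).congr_deriv (by ring)
            rw [hd.deriv]
            have := (hδ ⟨hx.1, hx.2.le⟩).1
            linarith
        have hten : Tendsto (fun x => u x - (1-ε)*x) (nhdsWithin 0 (Ioi 0)) (nhds (u 0)) := by
          have := hu0.sub ((hxten.const_mul (1-ε)))
          simpa using this
        have hle : ∀ᶠ x in nhdsWithin 0 (Ioi 0), u x - (1-ε)*x ≤ u y - (1-ε)*y := by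
          filter_upwards [Ioo_mem_nhdsGT_of_mem ⟨le_refl _, hy.1⟩] with x hx
          exact hmono ⟨hx.1, lt_trans hx.2 hy.2⟩ hy hx.2.le
        have := le_of_tendsto hten hle
        linarith
      · have hanti : AntitoneOn (fun x => u x - (1+ε)*x) (Ioo 0 δ) := by
          apply antitoneOn_of_deriv_nonpos (convex_Ioo _ _)
          · exact fun x hx => ((hu1 x hx.1).sub ((differentiable_id.const_mul _).differentiableAt)).continuousAt.continuousWithinAt
          · intro x hx; rw [interior_Ioo] at hx
            exact ((hu1 x hx.1).sub (by fun_prop)).differentiableWithinAt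
          · intro x hx; rw [interior_Ioo] at hx
            have hd : HasDerivAt (fun x => u x - (1+ε)*x) (deriv u x - (1+ε)) x := by
              exact (((hu1 x hx.1).hasDerivAt).sub ((hasDerivAt_id x).const_mul (1+ε))).congr_deriv (by ring)
            rw [hd.deriv]
            have := (hδ ⟨hx.1, hx.2.le⟩).2
            linarith
        have hten : Tendsto (fun x => u x - (1+ε)*x) (nhdsWithin 0 (Ioi 0)) (nhds (u 0)) := by
          have := hu0.sub ((hxten.const_mul (1+ε)))
          simpa using this
        have hge : ∀ᶠ x in nhdsWithin 0 (Ioi 0), u y - (1+ε)*y ≤ u x - (1+ε)*x := by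
          filter_upwards [Ioo_mem_nhdsGT_of_mem ⟨le_refl _, hy.1⟩] with x hx
          exact hanti ⟨hx.1, lt_trans hx.2 hy.2⟩ hy hx.2.le
        have := ge_of_tendsto hten hge
        linarith
    -- B x ≤ (a+b)/2 * x on Ioo 0 δ
    have hBb : ∀ x ∈ Ioo (0:ℝ) δ, B x ≤ (a+b)/2 * x := by
      intro x hx
      have h1 := (hδ ⟨hx.1, hx.2.le⟩).1
      have h2 := (hδ ⟨hx.1, hx.2.le⟩).2
      have h3 := (hubound x hx).1
      have h4 := (hubound x hx).2
      have hb0 : b * u 0 = 0 := hs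
      have hsq : (0:ℝ) ≤ c * (deriv u x - 1)^2 := by positivity
      have hεb : (|a|+|b|)*ε*x ≤ (-(a+b))/2 * x := by
        apply mul_le_mul_of_nonneg_right _ hx.1.le
        rw [hεdef, ← mul_div_assoc, div_le_div_iff₀ (by positivity) (by norm_num : (0:ℝ) < 2)]
        nlinarith [abs_nonneg a, abs_nonneg b]
      have haux1 : a * x * deriv u x ≤ a * x + |a| * ε * x := by
        have h5 : a * x * (deriv u x - 1) ≤ |a| * ε * x := by
          have h6 : |a * x * (deriv u x - 1)| ≤ |a| * x * ε := by
            rw [abs_mul, abs_mul, abs_of_nonneg hx.1.le]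
            apply mul_le_mul_of_nonneg_left _ (mul_nonneg (abs_nonneg a) hx.1.le)
            rw [abs_le]; constructor <;> linarith
          calc a * x * (deriv u x - 1) ≤ |a * x * (deriv u x - 1)| := le_abs_self _
            _ ≤ |a| * x * ε := h6
            _ = |a| * ε * x := by ring
        nlinarith [h5]
      have haux2 : b * u x ≤ b * x + |b| * ε * x := by
        have h5 : b * (u x - u 0 - x) ≤ |b| * ε * x := by
          have h6 : |b * (u x - u 0 - x)| ≤ |b| * (ε * x) := by
            rw [abs_mul]
            apply mul_le_mul_of_nonneg_left _ (abs_nonneg b)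
            rw [abs_le]; constructor <;> nlinarith
          calc b * (u x - u 0 - x) ≤ |b * (u x - u 0 - x)| := le_abs_self _
            _ ≤ |b| * (ε * x) := h6
            _ = |b| * ε * x := by ring
        nlinarith [h5]
      have : B x ≤ (a+b)*x + (|a|+|b|)*ε*x := by
        simp only [hBdef]
        nlinarith [haux1, haux2, hsq]
      nlinarith [hεb]
    -- F = deriv u - (a+b)/2 * log antitone
    set F : ℝ → ℝ := fun x => deriv u x - (a+b)/2 * Real.log x with hFdef
    have hFderiv : ∀ x ∈ Ioo (0:ℝ) δ, HasDerivAt F (deriv (deriv u) x - (a+b)/2 * x⁻¹) x := by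
      intro x hx
      exact ((hu2 x hx.1).hasDerivAt).sub ((Real.hasDerivAt_log (ne_of_gt hx.1)).const_mul ((a+b)/2))
    have hF' : ∀ x ∈ Ioo (0:ℝ) δ, deriv F x ≤ 0 := by
      intro x hx
      rw [(hFderiv x hx).deriv]
      have hode := hodeu x hx.1
      have hsq : (0:ℝ) < x ^ 2 := pow_pos hx.1 2
      have h5 : x ^ 2 * deriv (deriv u) x ≤ (a+b)/2 * x := by
        rw [hode]; exact hBb x hx
      have h6 : deriv (deriv u) x ≤ (a+b)/2 * x⁻¹ := by
        have h6a : deriv (deriv u) x ≤ ((a+b)/2 * x) / x^2 := by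
          rw [le_div_iff₀ hsq]; linarith [h5]
        have h6b : ((a+b)/2 * x) / x^2 = (a+b)/2 * x⁻¹ := by
          field_simp [ne_of_gt hx.1]
        rw [← h6b]; exact h6a
      linarith
    have hFanti : AntitoneOn F (Ioo 0 δ) := by
      apply antitoneOn_of_deriv_nonpos (convex_Ioo _ _)
      · exact fun x hx => ((hFderiv x hx).differentiableAt).continuousAt.continuousWithinAt
      · intro x hx; rw [interior_Ioo] at hx; exact ((hFderiv x hx).differentiableAt).differentiableWithinAt
      · intro x hx; rw [interior_Ioo] at hx; exact hF' x hx
    set y := δ/2 with hydef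
    have hymem : y ∈ Ioo (0:ℝ) δ := ⟨by linarith, by linarith⟩
    have hlow : ∀ᶠ x in nhdsWithin 0 (Ioi 0), F y + (a+b)/2 * Real.log x ≤ deriv u x := by
      filter_upwards [Ioo_mem_nhdsGT_of_mem ⟨le_refl _, hymem.1⟩] with x hx
      have hxm : x ∈ Ioo (0:ℝ) δ := ⟨hx.1, lt_trans hx.2 hymem.2⟩
      have := hFanti hxm hymem hx.2.le
      simp only [hFdef] at this ⊢
      linarith
    have htop : Tendsto (fun x : ℝ => F y + (a+b)/2 * Real.log x) (nhdsWithin 0 (Ioi 0)) atTop := by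
      have h8 : Tendsto Real.log (nhdsWithin 0 (Ioi 0)) atBot := Real.tendsto_log_nhdsGT_zero
      have h9 : Tendsto (fun x : ℝ => (a+b)/2 * Real.log x) (nhdsWithin 0 (Ioi 0)) atTop :=
        Tendsto.const_mul_atBot_of_neg (by linarith : (a+b)/2 < 0) h8
      exact tendsto_atTop_add_const_left _ (F y) h9
    have hbad : ∀ᶠ x in nhdsWithin 0 (Ioi 0), (2:ℝ) ≤ deriv u x := by
      filter_upwards [hlow, htop.eventually_ge_atTop 2] with x h1 h2
      linarith
    have hgood : ∀ᶠ x in nhdsWithin 0 (Ioi 0), deriv u x < 2 := hu'0.eventually_lt_const (by norm_num)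
    obtain ⟨x, h1, h2⟩ := (hbad.and hgood).exists
    linarith
  · -- s > 0
    have hev : ∀ᶠ x in nhdsWithin 0 (Ioi 0), s / 2 < B x := hBten.eventually_const_lt (by linarith)
    obtain ⟨δ, hδpos, hδ⟩ := mem_nhdsGT_iff_exists_Ioc_subset.1 hev
    have hδ0 : (0:ℝ) < δ := hδpos
    set F : ℝ → ℝ := fun x => deriv u x + (s/2) * x⁻¹ with hFdef
    have hFderiv : ∀ x ∈ Ioo (0:ℝ) δ, HasDerivAt F (deriv (deriv u) x + (s/2) * (-(x^2)⁻¹)) x := by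
      intro x hx
      exact ((hu2 x hx.1).hasDerivAt).add ((hasDerivAt_inv (ne_of_gt hx.1)).const_mul (s/2))
    have hF' : ∀ x ∈ Ioo (0:ℝ) δ, 0 ≤ deriv F x := by
      intro x hx
      rw [(hFderiv x hx).deriv]
      have hode := hodeu x hx.1
      have hBb : s / 2 < B x := hδ ⟨hx.1, hx.2.le⟩
      have hsq : (0:ℝ) < x ^ 2 := pow_pos hx.1 2
      have h5 : s / 2 ≤ x ^ 2 * deriv (deriv u) x := by
        rw [hode]; exact le_of_lt hBb
      have h6 : (s/2) / x ^ 2 ≤ deriv (deriv u) x := by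
        rw [div_le_iff₀ hsq]; linarith [h5]
      have h7 : (s/2) * (-(x^2)⁻¹) = -((s/2) / x^2) := by field_simp
      rw [h7]; linarith
    have hFmono : MonotoneOn F (Ioo 0 δ) := by
      apply monotoneOn_of_deriv_nonneg (convex_Ioo _ _)
      · exact fun x hx => ((hFderiv x hx).differentiableAt).continuousAt.continuousWithinAt
      · intro x hx; rw [interior_Ioo] at hx; exact ((hFderiv x hx).differentiableAt).differentiableWithinAt
      · intro x hx; rw [interior_Ioo] at hx; exact hF' x hx
    set y := δ/2 with hydef
    have hymem : y ∈ Ioo (0:ℝ) δ := ⟨by linarith, by linarith⟩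
    have hlow : ∀ᶠ x in nhdsWithin 0 (Ioi 0), deriv u x ≤ F y - (s/2) * x⁻¹ := by
      filter_upwards [Ioo_mem_nhdsGT_of_mem ⟨le_refl _, hymem.1⟩] with x hx
      have hxm : x ∈ Ioo (0:ℝ) δ := ⟨hx.1, lt_trans hx.2 hymem.2⟩
      have := hFmono hxm hymem hx.2.le
      simp only [hFdef] at this ⊢
      linarith
    have hbot : Tendsto (fun x : ℝ => F y - (s/2) * x⁻¹) (nhdsWithin 0 (Ioi 0)) atBot := by
      have h8 : Tendsto (fun x : ℝ => x⁻¹) (nhdsWithin 0 (Ioi 0)) atTop := tendsto_inv_nhdsGT_zero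
      have h9 : Tendsto (fun x : ℝ => (s/2) * x⁻¹) (nhdsWithin 0 (Ioi 0)) atTop :=
        h8.const_mul_atTop (by linarith)
      have h10 : Tendsto (fun x : ℝ => -((s/2) * x⁻¹)) (nhdsWithin 0 (Ioi 0)) atBot :=
        tendsto_neg_atTop_atBot.comp h9
      have h11 := tendsto_atBot_add_const_left _ (F y) h10
      apply h11.congr
      intro x; ring
    have hbad : ∀ᶠ x in nhdsWithin 0 (Ioi 0), deriv u x ≤ 0 := by
      filter_upwards [hlow, hbot.eventually_le_atBot 0] with x h1 h2
      linarith
    have hgood : ∀ᶠ x in nhdsWithin 0 (Ioi 0), (0:ℝ) < deriv u x := hu'0.eventually_const_lt (by norm_num)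
    obtain ⟨x, h1, h2⟩ := (hbad.and hgood).exists
    linarith

set_option maxHeartbeats 1000000 in
/-- Uniqueness (Proposition 4.1 via Lemma 4.2): two distinct solutions with the
same value at `0`, right derivative `1` at `0`, `u'' ≤ 0`, and derivatives
tending to `0` at infinity are impossible. -/
theorem stmt_18 (a b c : ℝ) (hc : 0 < c) (u v : ℝ → ℝ)
    (hucont : ContinuousOn u (Set.Ici 0)) (hvcont : ContinuousOn v (Set.Ici 0))
    (huC2 : ContDiffOn ℝ 2 u (Set.Ioi 0)) (hvC2 : ContDiffOn ℝ 2 v (Set.Ioi 0))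
    (hodeu : ∀ x ∈ Set.Ioi (0:ℝ),
      x ^ 2 * deriv (deriv u) x
        = a * x * deriv u x + b * u x - c * (deriv u x - 1) ^ 2)
    (hodev : ∀ x ∈ Set.Ioi (0:ℝ),
      x ^ 2 * deriv (deriv v) x
        = a * x * deriv v x + b * v x - c * (deriv v x - 1) ^ 2)
    (h0 : u 0 = v 0)
    (hu'0 : Filter.Tendsto (deriv u) (nhdsWithin 0 (Set.Ioi 0)) (nhds 1))
    (hv'0 : Filter.Tendsto (deriv v) (nhdsWithin 0 (Set.Ioi 0)) (nhds 1))
    (hu'' : ∀ x ∈ Set.Ioi (0:ℝ), deriv (deriv u) x ≤ 0)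
    (hu'inf : Filter.Tendsto (deriv u) Filter.atTop (nhds 0))
    (hv'inf : Filter.Tendsto (deriv v) Filter.atTop (nhds 0))
    (hne : ∃ x ∈ Set.Ici (0:ℝ), u x ≠ v x) : False := by
  -- differentiability facts
  have huD : ContDiffOn ℝ 1 (deriv u) (Set.Ioi 0) :=
    huC2.deriv_of_isOpen isOpen_Ioi (by norm_num)
  have hvD : ContDiffOn ℝ 1 (deriv v) (Set.Ioi 0) :=
    hvC2.deriv_of_isOpen isOpen_Ioi (by norm_num)
  have hu1 : ∀ x ∈ Ioi (0:ℝ), DifferentiableAt ℝ u x := fun x hx =>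
    (huC2.differentiableOn (by norm_num)).differentiableAt (isOpen_Ioi.mem_nhds hx)
  have hv1 : ∀ x ∈ Ioi (0:ℝ), DifferentiableAt ℝ v x := fun x hx =>
    (hvC2.differentiableOn (by norm_num)).differentiableAt (isOpen_Ioi.mem_nhds hx)
  have hu2 : ∀ x ∈ Ioi (0:ℝ), DifferentiableAt ℝ (deriv u) x := fun x hx =>
    (huD.differentiableOn (by norm_num)).differentiableAt (isOpen_Ioi.mem_nhds hx)
  have hv2 : ∀ x ∈ Ioi (0:ℝ), DifferentiableAt ℝ (deriv v) x := fun x hx =>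
    (hvD.differentiableOn (by norm_num)).differentiableAt (isOpen_Ioi.mem_nhds hx)
  have hu1c : ContinuousOn (deriv u) (Ioi 0) := huD.continuousOn
  have hv1c : ContinuousOn (deriv v) (Ioi 0) := hvD.continuousOn
  have hu2c : ContinuousOn (deriv (deriv u)) (Ioi 0) :=
    huD.continuousOn_deriv_of_isOpen isOpen_Ioi (le_refl _)
  rcases lt_or_ge (a + b) 0 with hab | hab
  · exact lemA a b c hc u hucont hu1 hu2 hodeu hu'0 hab
  -- main case : a + b ≥ 0
  set z : ℝ → ℝ := fun x => deriv v x - deriv u x with hzdef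
  have hzdiff : ∀ x ∈ Ioi (0:ℝ), DifferentiableAt ℝ z x := fun x hx =>
    (hv2 x hx).sub (hu2 x hx)
  set G₁ : ℝ → ℝ := fun t =>
    (a*t*(deriv v t - deriv u t) + b*(v t - u t)
      - c*(deriv v t - 1)^2 + c*(deriv u t - 1)^2)/t^2 with hG₁def
  have hz'eq : ∀ x ∈ Ioi (0:ℝ), deriv z x = G₁ x := by
    intro x hx
    have hx2 : (x:ℝ)^2 ≠ 0 := pow_ne_zero 2 (ne_of_gt hx)
    have h1 : deriv z x = deriv (deriv v) x - deriv (deriv u) x := by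
      rw [hzdef]
      exact deriv_sub (hv2 x hx) (hu2 x hx)
    rw [h1, hG₁def, eq_div_iff hx2]
    linear_combination (hodev x hx) - (hodeu x hx)
  -- derivative of G₁
  have hG₁deriv : ∀ x ∈ Ioi (0:ℝ), HasDerivAt G₁
      (((a*(deriv v x - deriv u x) + a*x*(deriv (deriv v) x - deriv (deriv u) x)
          + b*(deriv v x - deriv u x)
          - c*(2*(deriv v x - 1)*deriv (deriv v) x)
          + c*(2*(deriv u x - 1)*deriv (deriv u) x)) * x^2
        - (a*x*(deriv v x - deriv u x) + b*(v x - u x)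
            - c*(deriv v x - 1)^2 + c*(deriv u x - 1)^2) * (2*x^1)) / (x^2)^2) x := by
    intro x hx
    have hx2 : (x:ℝ)^2 ≠ 0 := pow_ne_zero 2 (ne_of_gt hx)
    have hzd : HasDerivAt (fun t => deriv v t - deriv u t)
        (deriv (deriv v) x - deriv (deriv u) x) x :=
      ((hv2 x hx).hasDerivAt).sub ((hu2 x hx).hasDerivAt)
    have p1 : HasDerivAt (fun t => a*t*(deriv v t - deriv u t))
        (a*(deriv v x - deriv u x) + a*x*(deriv (deriv v) x - deriv (deriv u) x)) x := by
      have hid : HasDerivAt (fun t : ℝ => a*t) a x := by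
        simpa using (hasDerivAt_id x).const_mul a
      have := hid.mul hzd
      exact this
    have p2 : HasDerivAt (fun t => b*(v t - u t)) (b*(deriv v x - deriv u x)) x := by
      have := (((hv1 x hx).hasDerivAt).sub ((hu1 x hx).hasDerivAt)).const_mul b
      simpa using this
    have p3 : HasDerivAt (fun t => c*(deriv v t - 1)^2)
        (c*(2*(deriv v x - 1)*deriv (deriv v) x)) x := by
      have h3 := (((hv2 x hx).hasDerivAt).sub_const 1).pow 2
      have := h3.const_mul c
      exact this.congr_deriv (by push_cast; ring)
    have p4 : HasDerivAt (fun t => c*(deriv u t - 1)^2)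
        (c*(2*(deriv u x - 1)*deriv (deriv u) x)) x := by
      have h3 := (((hu2 x hx).hasDerivAt).sub_const 1).pow 2
      have := h3.const_mul c
      exact this.congr_deriv (by push_cast; ring)
    have hN : HasDerivAt (fun t => a*t*(deriv v t - deriv u t) + b*(v t - u t)
        - c*(deriv v t - 1)^2 + c*(deriv u t - 1)^2)
        (a*(deriv v x - deriv u x) + a*x*(deriv (deriv v) x - deriv (deriv u) x)
          + b*(deriv v x - deriv u x)
          - c*(2*(deriv v x - 1)*deriv (deriv v) x)
          + c*(2*(deriv u x - 1)*deriv (deriv u) x)) x :=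
      ((p1.add p2).sub p3).add p4
    have hden : HasDerivAt (fun t : ℝ => t^2) (2*x^1) x := by
      simpa using hasDerivAt_pow 2 x
    exact hN.div hden hx2
  have hz'diff : ∀ x ∈ Ioi (0:ℝ), DifferentiableAt ℝ (deriv z) x := by
    intro x hx
    have hev : deriv z =ᶠ[nhds x] G₁ :=
      Filter.eventuallyEq_of_mem (Ioi_mem_nhds hx) hz'eq
    exact hev.differentiableAt_iff.2 (hG₁deriv x hx).differentiableAt
  -- the coefficient functions
  set gg : ℝ → ℝ := fun x => -(((a-2)*x - 2*c*(deriv u x - 1) - 2*c*(deriv v x - deriv u x))/x^2) with hggdef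
  set hh : ℝ → ℝ := fun x => -(((a+b) - 2*c*(deriv (deriv u) x))/x^2) with hhhdef
  have heqz : ∀ x ∈ Ioi (0:ℝ),
      deriv (deriv z) x + gg x * deriv z x + hh x * z x = 0 := by
    intro x hx
    have hx0 : (x:ℝ) ≠ 0 := ne_of_gt hx
    have hx2 : (x:ℝ)^2 ≠ 0 := pow_ne_zero 2 hx0
    have hev : deriv z =ᶠ[nhds x] G₁ :=
      Filter.eventuallyEq_of_mem (Ioi_mem_nhds hx) hz'eq
    have hdd : deriv (deriv z) x = deriv G₁ x := hev.deriv_eq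
    rw [hdd, (hG₁deriv x hx).deriv, hz'eq x hx]
    have hddu : deriv (deriv u) x
        = (a * x * deriv u x + b * u x - c * (deriv u x - 1) ^ 2)/x^2 := by
      rw [eq_div_iff hx2]; linarith [hodeu x hx]
    have hddv : deriv (deriv v) x
        = (a * x * deriv v x + b * v x - c * (deriv v x - 1) ^ 2)/x^2 := by
      rw [eq_div_iff hx2]; linarith [hodev x hx]
    rw [hG₁def, hggdef, hhhdef]
    simp only
    rw [hddu, hddv]
    field_simp
    ring
  have hggc : ContinuousOn gg (Ioi 0) := by
    apply ContinuousOn.neg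
    apply ContinuousOn.div
    · exact ((continuousOn_const.mul continuousOn_id).sub
        (continuousOn_const.mul (hu1c.sub continuousOn_const))).sub
        (continuousOn_const.mul (hv1c.sub hu1c))
    · exact (continuousOn_id.pow 2)
    · exact fun x hx => pow_ne_zero 2 (ne_of_gt hx)
  have hhhc : ContinuousOn hh (Ioi 0) := by
    apply ContinuousOn.neg
    apply ContinuousOn.div
    · exact continuousOn_const.sub (continuousOn_const.mul hu2c)
    · exact (continuousOn_id.pow 2)
    · exact fun x hx => pow_ne_zero 2 (ne_of_gt hx)
  have hhh0 : ∀ x ∈ Ioi (0:ℝ), hh x ≤ 0 := by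
    intro x hx
    rw [hhhdef]
    simp only [neg_nonpos]
    apply div_nonneg
    · nlinarith [hu'' x hx]
    · positivity
  have hz0 : Tendsto z (nhdsWithin 0 (Ioi 0)) (nhds 0) := by
    have := hv'0.sub hu'0
    simpa [hzdef] using this
  have hztop : Tendsto z atTop (nhds 0) := by
    have := hv'inf.sub hu'inf
    simpa [hzdef] using this
  -- apply the maximum principle to z and -z
  have hzle : ∀ x ∈ Ioi (0:ℝ), z x ≤ 0 :=
    maxp z gg hh hzdiff hz'diff heqz hggc hhhc hhh0 hz0 hztop
  have hnegderiv : deriv (fun x => -z x) = fun x => -(deriv z x) := funext fun x => deriv.neg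
  have hzge : ∀ x ∈ Ioi (0:ℝ), -z x ≤ 0 := by
    apply maxp (fun x => -z x) gg hh
    · exact fun x hx => (hzdiff x hx).neg
    · intro x hx
      rw [hnegderiv]
      exact (hz'diff x hx).neg
    · intro x hx
      rw [hnegderiv]
      have h2 : deriv (fun x => -(deriv z x)) x = -(deriv (deriv z) x) := deriv.neg
      rw [h2]
      have := heqz x hx
      ring_nf
      ring_nf at this
      linarith
    · exact hggc
    · exact hhhc
    · exact hhh0
    · simpa using hz0.neg
    · simpa using hztop.neg
  have hzzero : ∀ x ∈ Ioi (0:ℝ), z x = 0 := fun x hx =>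
    le_antisymm (hzle x hx) (by linarith [hzge x hx])
  -- w := v - u is constant on Ioi 0
  set w : ℝ → ℝ := fun x => v x - u x with hwdef
  have hwderiv : ∀ x ∈ Ioi (0:ℝ), deriv w x = 0 := by
    intro x hx
    rw [hwdef]
    rw [deriv_fun_sub (hv1 x hx) (hu1 x hx)]
    have := hzzero x hx
    simpa [hzdef] using this
  have hwcont : ContinuousOn w (Ioi 0) := fun x hx =>
    ((hv1 x hx).sub (hu1 x hx)).continuousAt.continuousWithinAt
  have hwdiff : DifferentiableOn ℝ w (interior (Ioi 0)) := by
    rw [interior_Ioi]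
    exact fun x hx => ((hv1 x hx).sub (hu1 x hx)).differentiableWithinAt
  have hmono : MonotoneOn w (Ioi 0) :=
    monotoneOn_of_deriv_nonneg (convex_Ioi 0) hwcont hwdiff
      (fun x hx => by rw [interior_Ioi] at hx; rw [hwderiv x hx])
  have hanti : AntitoneOn w (Ioi 0) :=
    antitoneOn_of_deriv_nonpos (convex_Ioi 0) hwcont hwdiff
      (fun x hx => by rw [interior_Ioi] at hx; rw [hwderiv x hx])
  have hconst : ∀ x ∈ Ioi (0:ℝ), ∀ y ∈ Ioi (0:ℝ), w x = w y := by
    intro x hx y hy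
    rcases le_total x y with hle | hle
    · exact le_antisymm (hmono hx hy hle) (hanti hx hy hle)
    · exact (le_antisymm (hmono hy hx hle) (hanti hy hx hle)).symm
  have hw00 : w 0 = 0 := by rw [hwdef]; simp [h0]
  have hwzero : ∀ x ∈ Ioi (0:ℝ), w x = 0 := by
    intro x hx
    have hcwa : Tendsto w (nhdsWithin 0 (Ici 0)) (nhds (w 0)) :=
      (hvcont 0 self_mem_Ici).sub (hucont 0 self_mem_Ici)
    have ht1 : Tendsto w (nhdsWithin 0 (Ioi 0)) (nhds (w 0)) :=
      hcwa.mono_left (nhdsWithin_mono 0 Ioi_subset_Ici_self)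
    have hev : w =ᶠ[nhdsWithin 0 (Ioi 0)] fun _ => w x :=
      Filter.eventuallyEq_of_mem self_mem_nhdsWithin (fun t ht => hconst t ht x hx)
    have ht2 : Tendsto w (nhdsWithin 0 (Ioi 0)) (nhds (w x)) :=
      tendsto_const_nhds.congr' hev.symm
    have := tendsto_nhds_unique ht1 ht2
    rw [← this, hw00]
  obtain ⟨p, hp, hpne⟩ := hne
  rcases eq_or_lt_of_le (Set.mem_Ici.1 hp) with hp0 | hp0
  · exact hpne (by rw [← hp0] at *; exact h0)
  · have := hwzero p hp0
    rw [hwdef] at this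
    simp only [sub_eq_zero] at this
    exact hpne this.symm
end

section
/- Let c > 0, k > 0, l > 0, a ∈ ℝ, α < 3/2 + a − 2cl, and set β := 4ck. Suppose x₁ > 0 satisfies 2ck/√x₁ + α ≥ 0 and 2ck·(3/2 + a − 2cl − α)/√x₁ > α(α−1) − aα − b + 2clα. If φ : (0, x₁) → ℝ satisfies φ(x) ≤ −k + l√x for all x ∈ (0, x₁), then for all x ∈ (0, x₁): (β²/4 − ckβ)·x^{α−1} + [(α−3/2)β/2 + αβ/2 − aβ/2 − 2ckα + clβ]·x^{α−1/2} + [α(α−1) − aα − b + 2clα]·x^α < 0; in particular the coefficient of x^{α−1} vanishes and the coefficient of x^{α−1/2} equals 2ck(α − 3/2 − a + 2cl) < 0. -/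
/-- Algebraic core of the subsolution construction (Lemma 5.3), with `β = 4ck`. -/
theorem stmt_19 (a b c k l α x₁ : ℝ) (hc : 0 < c) (hk : 0 < k) (hl : 0 < l)
    (hα : α < 3 / 2 + a - 2 * c * l) (hx₁ : 0 < x₁)
    (hx₁a : 0 ≤ 2 * c * k / Real.sqrt x₁ + α)
    (hx₁b : α * (α - 1) - a * α - b + 2 * c * l * α
      < 2 * c * k * (3 / 2 + a - 2 * c * l - α) / Real.sqrt x₁)
    (φ : ℝ → ℝ)
    (hφ : ∀ x ∈ Set.Ioo 0 x₁, φ x ≤ -k + l * Real.sqrt x) :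
    (∀ x ∈ Set.Ioo 0 x₁,
      ((4 * c * k) ^ 2 / 4 - c * k * (4 * c * k)) * x ^ (α - 1)
      + ((α - 3 / 2) * (4 * c * k) / 2 + α * (4 * c * k) / 2
          - a * (4 * c * k) / 2 - 2 * c * k * α + c * l * (4 * c * k))
          * x ^ (α - 1 / 2)
      + (α * (α - 1) - a * α - b + 2 * c * l * α) * x ^ α < 0) ∧
    (4 * c * k) ^ 2 / 4 - c * k * (4 * c * k) = 0 ∧
    (α - 3 / 2) * (4 * c * k) / 2 + α * (4 * c * k) / 2 - a * (4 * c * k) / 2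
        - 2 * c * k * α + c * l * (4 * c * k)
      = 2 * c * k * (α - 3 / 2 - a + 2 * c * l) ∧
    2 * c * k * (α - 3 / 2 - a + 2 * c * l) < 0 := by
  have hck : 0 < c * k := mul_pos hc hk
  have hneg : α - 3 / 2 - a + 2 * c * l < 0 := by linarith
  have hDpos : 0 < 2 * c * k * (3 / 2 + a - 2 * c * l - α) := by
    have : 0 < 3 / 2 + a - 2 * c * l - α := by linarith
    positivity
  refine ⟨?_, by ring, by ring, ?_⟩
  · intro x hx
    obtain ⟨hx0, hxlt⟩ := hx
    set C := α * (α - 1) - a * α - b + 2 * c * l * α with hCdef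
    set D := 2 * c * k * (3 / 2 + a - 2 * c * l - α) with hDdef
    have hsx : 0 < Real.sqrt x := Real.sqrt_pos.mpr hx0
    have hsx₁ : 0 < Real.sqrt x₁ := Real.sqrt_pos.mpr hx₁
    have hkey : C * Real.sqrt x < D := by
      rcases le_or_gt 0 C with hC | hC
      · have h1 : C * Real.sqrt x ≤ C * Real.sqrt x₁ :=
          mul_le_mul_of_nonneg_left (Real.sqrt_le_sqrt hxlt.le) hC
        have h2 : C * Real.sqrt x₁ < D := by
          have := (lt_div_iff₀ hsx₁).mp hx₁b
          linarith
        linarith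
      · have : C * Real.sqrt x < 0 := mul_neg_of_neg_of_pos hC hsx
        linarith
    have hxa : x ^ α = x ^ (α - 1 / 2) * Real.sqrt x := by
      rw [Real.sqrt_eq_rpow, ← Real.rpow_add hx0]
      norm_num
    have hxp : 0 < x ^ (α - 1 / 2) := Real.rpow_pos_of_pos hx0 _
    have heq : ((4 * c * k) ^ 2 / 4 - c * k * (4 * c * k)) * x ^ (α - 1)
      + ((α - 3 / 2) * (4 * c * k) / 2 + α * (4 * c * k) / 2
          - a * (4 * c * k) / 2 - 2 * c * k * α + c * l * (4 * c * k))
          * x ^ (α - 1 / 2)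
      + C * x ^ α = x ^ (α - 1 / 2) * (-D + C * Real.sqrt x) := by
      rw [hxa, hCdef, hDdef]; ring
    rw [heq]
    have : -D + C * Real.sqrt x < 0 := by linarith
    exact mul_neg_of_pos_of_neg hxp this
  · have : 2 * c * k * (α - 3 / 2 - a + 2 * c * l) = -(2 * (c * k) * (3 / 2 + a - 2 * c * l - α)) := by ring
    rw [this]
    have : 0 < 3 / 2 + a - 2 * c * l - α := by linarith
    nlinarith
end
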